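/- arXiv:2605.12666 — 11 statements merged into one kernel-verified Lean document; each statement's English description precedes it below -/
import Mathlib

section
/- Let f : ℝ → ℝ be a polynomial. Then the function H : ℝ → ℝ defined by H(x) = f''(x) / √(1 + (f'(x))²) is globally Lipschitz continuous on ℝ, i.e., there exists L_H ≥ 0 such that |H(x) − H(y)| ≤ L_H |x − y| for all x, y ∈ ℝ. -/
open Polynomial Filter Real

private lemma comp_negX_negX (p : ℝ[X]) : (p.comp (-X)).comp (-X) = p := by
  rw [Polynomial.comp_assoc]; simp

private lemma degree_comp_negX (p : ℝ[X]) : (p.comp (-X : ℝ[X])).degree = p.degree := by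
  rcases eq_or_ne p 0 with rfl | h
  · simp
  · have h2 : p.comp (-X : ℝ[X]) ≠ 0 := by
      intro hc
      apply h
      have := congrArg (fun u => Polynomial.comp u (-X : ℝ[X])) hc
      simpa [comp_negX_negX] using this
    rw [degree_eq_natDegree h, degree_eq_natDegree h2, natDegree_comp]
    simp

private lemma poly_div_tendsto_atBot (u v : ℝ[X]) (h : u.degree < v.degree) :
    Tendsto (fun x => u.eval x / v.eval x) atBot (nhds 0) := by
  have h' : (u.comp (-X : ℝ[X])).degree < (v.comp (-X : ℝ[X])).degree := by
    rw [degree_comp_negX, degree_comp_negX]; exact h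
  have := (Polynomial.div_tendsto_zero_of_degree_lt (u.comp (-X)) (v.comp (-X)) h').comp
    tendsto_neg_atBot_atTop
  simpa [Function.comp_def, Polynomial.eval_comp, neg_neg] using this

private lemma poly_abs_tendsto_atBot (P : ℝ[X]) (hdeg : 0 < P.degree) :
    Tendsto (fun x => |P.eval x|) atBot atTop := by
  have h' : 0 < (P.comp (-X : ℝ[X])).degree := by rw [degree_comp_negX]; exact hdeg
  have := (Polynomial.abs_tendsto_atTop (P.comp (-X)) h').comp tendsto_neg_atBot_atTop
  simpa [Function.comp_def, Polynomial.eval_comp, neg_neg] using this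

private lemma core_bound (a b c : ℝ) (ha : 1 ≤ |a|) :
    |(c * Real.sqrt (1+a^2) - b * (1/(2*Real.sqrt (1+a^2)) * (2*a*b))) / Real.sqrt (1+a^2)^2|
      ≤ |c| / |a| + (b/a)^2 := by
  set t := Real.sqrt (1+a^2) with ht
  have ht0 : 0 < t := Real.sqrt_pos.2 (by positivity)
  have hat : |a| ≤ t := by
    rw [ht, ← Real.sqrt_sq_eq_abs]
    exact Real.sqrt_le_sqrt (by nlinarith)
  have ha0 : (0:ℝ) < |a| := lt_of_lt_of_le one_pos ha
  have hE : (c * t - b * (1/(2*t) * (2*a*b))) / t^2 = c/t - a * b^2 / t^3 := by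
    field_simp
  rw [hE]
  have h1 : |c / t - a * b^2 / t^3| ≤ |c| / t + |a| * b^2/t^3 := by
    calc |c / t - a * b^2 / t^3| ≤ |c / t| + |a * b^2 / t^3| := abs_sub _ _
      _ = |c| / t + |a| * b^2/t^3 := by
          rw [abs_div, abs_div, abs_of_pos ht0, abs_of_pos (by positivity : (0:ℝ) < t^3),
            abs_mul, abs_pow, sq_abs]
  have h2 : |c| / t ≤ |c|/|a| := by gcongr
  have h3 : |a| * b^2/t^3 ≤ (b/a)^2 := by
    have hle : |a| * b^2/t^3 ≤ |a| * b^2/|a|^3 := by gcongr <;> positivity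
    have heq : |a| * b^2/|a|^3 = (b/a)^2 := by
      have h3' : |a|^3 = |a| * a^2 := by rw [← sq_abs]; ring
      rw [div_pow, h3', mul_div_mul_left _ _ (ne_of_gt ha0)]
    linarith [hle, heq.le]
  linarith

/-- For a polynomial `f : ℝ → ℝ`, the preconditioned Hessian
`H(x) = f''(x) / √(1 + f'(x)²)` (relative to `φ = cosh ∘ |·| − 1`) is globally
Lipschitz continuous on `ℝ`. -/
theorem polynomial_preconditioned_hessian_lipschitz
    (f : ℝ → ℝ) (hf : ∃ p : Polynomial ℝ, ∀ x, f x = p.eval x) :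
    ∃ L_H : ℝ, 0 ≤ L_H ∧ ∀ x y : ℝ,
      |deriv (deriv f) x / Real.sqrt (1 + deriv f x ^ 2) -
        deriv (deriv f) y / Real.sqrt (1 + deriv f y ^ 2)| ≤ L_H * |x - y| := by
  obtain ⟨p, hp⟩ := hf
  have hfe : f = fun x => p.eval x := funext hp
  subst hfe
  have hd1 : deriv (fun x => p.eval x) = fun x => p.derivative.eval x :=
    funext fun x => p.deriv
  simp only [hd1]
  have hd2 : deriv (fun x => p.derivative.eval x) = fun x => p.derivative.derivative.eval x :=
    funext fun x => (p.derivative).deriv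
  simp only [hd2]
  set r := p.derivative with hr
  set q := r.derivative with hq
  rcases eq_or_ne q 0 with hq0 | hq0
  · exact ⟨0, le_refl 0, fun x y => by simp [hq0]⟩
  -- main case
  have hr0 : r ≠ 0 := by
    intro h
    apply hq0
    rw [hq, h, derivative_zero]
  have hrnd : r.natDegree ≠ 0 := by
    intro h
    apply hq0
    rw [hq, Polynomial.eq_C_of_natDegree_eq_zero h, derivative_C]
  have hrdeg : 0 < r.degree := natDegree_pos_iff_degree_pos.mp (Nat.pos_of_ne_zero hrnd)
  have hdq : q.degree < r.degree := degree_derivative_lt hr0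
  have hdq' : q.derivative.degree < r.degree := degree_derivative_le.trans_lt hdq
  set H : ℝ → ℝ := fun x => q.eval x / Real.sqrt (1 + r.eval x ^ 2) with hH
  set g : ℝ → ℝ := fun x =>
      (q.derivative.eval x * Real.sqrt (1 + r.eval x ^ 2) -
        q.eval x * (1 / (2 * Real.sqrt (1 + r.eval x ^ 2)) * (2 * r.eval x * q.eval x))) /
      Real.sqrt (1 + r.eval x ^ 2) ^ 2 with hg
  have hder : ∀ x : ℝ, HasDerivAt H (g x) x := by
    intro x
    have hs : (0:ℝ) < 1 + r.eval x ^ 2 := by positivity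
    have h1 : HasDerivAt (fun y => 1 + r.eval y ^ 2) (2 * r.eval x * q.eval x) x := by
      have := ((Polynomial.hasDerivAt r x).pow 2).const_add 1
      refine this.congr_deriv ?_
      rw [hq]; norm_num
    have h2 : HasDerivAt (fun y => Real.sqrt (1 + r.eval y ^ 2))
        (1 / (2 * Real.sqrt (1 + r.eval x ^ 2)) * (2 * r.eval x * q.eval x)) x :=
      (Real.hasDerivAt_sqrt (ne_of_gt hs)).comp x h1
    exact (Polynomial.hasDerivAt q x).div h2 (ne_of_gt (Real.sqrt_pos.2 hs))
  have hsq_cont : Continuous fun x : ℝ => Real.sqrt (1 + r.eval x ^ 2) :=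
    Real.continuous_sqrt.comp (continuous_const.add ((r.continuous).pow 2))
  have hg_cont : Continuous g := by
    apply Continuous.div
    · exact ((q.derivative.continuous).mul hsq_cont).sub
        ((q.continuous).mul
          ((continuous_const.div (continuous_const.mul hsq_cont)
            (fun x => by simp only [Pi.mul_apply]; positivity)).mul
            ((continuous_const.mul (r.continuous)).mul (q.continuous))))
    · exact hsq_cont.pow 2
    · intro x
      have hs : (0:ℝ) < 1 + r.eval x ^ 2 := by positivity
      positivity
  set b : ℝ → ℝ := fun x => |q.derivative.eval x| / |r.eval x| + (q.eval x / r.eval x) ^ 2 with hb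
  have tendsto_top : Tendsto b atTop (nhds 0) := by
    rw [hb]
    have t1 := (Polynomial.div_tendsto_zero_of_degree_lt q.derivative r hdq').abs
    have t2 := Polynomial.div_tendsto_zero_of_degree_lt q r hdq
    have := t1.add (t2.mul t2)
    simpa [pow_two, abs_div] using this
  have tendsto_bot : Tendsto b atBot (nhds 0) := by
    rw [hb]
    have t1 := (poly_div_tendsto_atBot q.derivative r hdq').abs
    have t2 := poly_div_tendsto_atBot q r hdq
    have := t1.add (t2.mul t2)
    simpa [pow_two, abs_div] using this
  have key : ∀ x : ℝ, 1 ≤ |r.eval x| → |g x| ≤ b x := by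
    intro x hx
    simp only [hg, hb]
    exact core_bound (r.eval x) (q.eval x) (q.derivative.eval x) hx
  have ev_top : ∀ᶠ x in atTop, |g x| ≤ 1 := by
    filter_upwards [(Polynomial.abs_tendsto_atTop r hrdeg).eventually_ge_atTop 1,
      tendsto_top.eventually (gt_mem_nhds one_pos)] with x h1 h2
    exact (key x h1).trans h2.le
  have ev_bot : ∀ᶠ x in atBot, |g x| ≤ 1 := by
    filter_upwards [(poly_abs_tendsto_atBot r hrdeg).eventually_ge_atTop 1,
      tendsto_bot.eventually (gt_mem_nhds one_pos)] with x h1 h2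
    exact (key x h1).trans h2.le
  obtain ⟨A, hA⟩ := eventually_atTop.mp ev_top
  obtain ⟨B, hB⟩ := eventually_atBot.mp ev_bot
  obtain ⟨C, hC⟩ := (isCompact_Icc (a := B) (b := A)).exists_bound_of_continuousOn
    hg_cont.continuousOn
  set M : ℝ := max C 1 with hM
  have hM0 : (0:ℝ) ≤ M := le_trans zero_le_one (le_max_right C 1)
  have hbound : ∀ x : ℝ, ‖g x‖ ≤ M := by
    intro x
    rcases le_or_gt A x with h | h
    · calc ‖g x‖ = |g x| := Real.norm_eq_abs _
        _ ≤ 1 := hA x h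
        _ ≤ M := le_max_right C 1
    rcases le_or_gt x B with h' | h'
    · calc ‖g x‖ = |g x| := Real.norm_eq_abs _
        _ ≤ 1 := hB x h'
        _ ≤ M := le_max_right C 1
    · exact (hC x ⟨h'.le, h.le⟩).trans (le_max_left C 1)
  refine ⟨M, hM0, fun x y => ?_⟩
  have hlip := Convex.norm_image_sub_le_of_norm_deriv_le (s := Set.univ)
    (fun z _ => (hder z).differentiableAt)
    (fun z _ => by rw [(hder z).deriv]; exact hbound z)
    convex_univ (Set.mem_univ y) (Set.mem_univ x)
  simpa [Real.norm_eq_abs] using hlip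
end

section
/- Let f : ℝⁿ → ℝ be twice continuously differentiable, let x⋆ ∈ ℝⁿ satisfy ∇f(x⋆) = 0 and ∇²f(x⋆) ⪰ μ_f I for some μ_f > 0, and let φ* : ℝⁿ → ℝ be twice continuously differentiable with ∇φ*(0) = 0 and ∇²φ*(0) positive definite. Define g(x) = ∇φ*(∇f(x)) and H(x) = ∇²φ*(∇f(x)) ∇²f(x). Then there exists δ > 0 such that for every x⁰ ∈ B(x⋆; δ), the matrix H(x^k) is invertible at every iterate and the sequence defined by x^{k+1} = x^k − H(x^k)^{-1} g(x^k) remains in B(x⋆; δ) and converges Q-superlinearly to x⋆, i.e., x^k → x⋆ and ‖x^{k+1} − x⋆‖ / ‖x^k − x⋆‖ → 0 (whenever x^k ≠ x⋆). -/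
open Filter Metric

private lemma clm_isUnit_of_injective {E : Type*} [NormedAddCommGroup E] [NormedSpace ℝ E]
    [FiniteDimensional ℝ E] (T : E →L[ℝ] E) (h : Function.Injective T) : IsUnit T := by
  have hsurj : Function.Surjective T :=
    LinearMap.injective_iff_surjective.mp (show Function.Injective (T : E →ₗ[ℝ] E) from h)
  let e := ContinuousLinearEquiv.ofBijective T (LinearMap.ker_eq_bot.mpr h)
    (LinearMap.range_eq_top.mpr hsurj)
  refine ⟨e.toUnit, ?_⟩
  ext v
  simp [e, ContinuousLinearEquiv.toUnit]

private lemma clm_bijective_of_isUnit {E : Type*} [NormedAddCommGroup E] [NormedSpace ℝ E]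
    (T : E →L[ℝ] E) (h : IsUnit T) : Function.Bijective T := by
  obtain ⟨u, rfl⟩ := h
  have h1 : ∀ v, (↑u⁻¹ : E →L[ℝ] E) ((↑u : E →L[ℝ] E) v) = v := fun v => by
    rw [← ContinuousLinearMap.mul_apply, u.inv_mul, ContinuousLinearMap.one_apply]
  have h2 : ∀ v, (↑u : E →L[ℝ] E) ((↑u⁻¹ : E →L[ℝ] E) v) = v := fun v => by
    rw [← ContinuousLinearMap.mul_apply, u.mul_inv, ContinuousLinearMap.one_apply]
  exact ⟨Function.LeftInverse.injective h1, Function.RightInverse.surjective h2⟩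

private lemma newton_aux {E : Type*} [NormedAddCommGroup E] [NormedSpace ℝ E]
    [FiniteDimensional ℝ E]
    (G : E → E) (A : E → E →L[ℝ] E) (hGd : ∀ x, HasFDerivAt G (A x) x)
    (hAc : Continuous A) (xstar : E) (hG0 : G xstar = 0)
    (hinj : Function.Injective (A xstar)) :
    ∃ δ > 0, ∀ x0 ∈ closedBall xstar δ, ∀ xs : ℕ → E, xs 0 = x0 →
      (∀ k, A (xs k) (xs k - xs (k + 1)) = G (xs k)) →
      (∀ k, Function.Bijective (A (xs k))) ∧
      (∀ k, xs k ∈ closedBall xstar δ) ∧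
      Tendsto xs atTop (nhds xstar) ∧
      Tendsto (fun k => ‖xs (k + 1) - xstar‖ / ‖xs k - xstar‖) atTop (nhds 0) := by
  obtain ⟨u, hu⟩ := clm_isUnit_of_injective (A xstar) hinj
  set C : ℝ := ‖Ring.inverse (A xstar)‖ + 1 with hCdef
  have hCpos : 0 < C := by positivity
  have h1ev : ∀ᶠ x in nhds xstar, IsUnit (A x) :=
    hAc.continuousAt.eventually_mem (Units.isOpen.mem_nhds ⟨u, hu⟩)
  have h2ev : ∀ᶠ x in nhds xstar, ‖Ring.inverse (A x)‖ < C := by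
    have hc : ContinuousAt (fun x => ‖Ring.inverse (A x)‖) xstar :=
      ((hu ▸ NormedRing.inverse_continuousAt u).comp hAc.continuousAt).norm
    exact hc.eventually_lt_const (by simp [hCdef])
  obtain ⟨δ₁, hδ₁pos, hδ₁⟩ : ∃ δ₁ > 0, ∀ x ∈ closedBall xstar δ₁,
      IsUnit (A x) ∧ ‖Ring.inverse (A x)‖ ≤ C := by
    obtain ⟨r, hr, h⟩ := Metric.eventually_nhds_iff_ball.mp
      (h1ev.and (h2ev.mono fun x hx => hx.le))
    exact ⟨r / 2, by linarith, fun x hx =>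
      h x (mem_ball.mpr (lt_of_le_of_lt (mem_closedBall.mp hx) (by linarith)))⟩
  have key : ∀ ε > 0, ∃ r, 0 < r ∧ r ≤ δ₁ ∧ ∀ x ∈ closedBall xstar r, ∀ xp,
      A x (x - xp) = G x → ‖xp - xstar‖ ≤ C * ε * ‖x - xstar‖ := by
    intro ε hε
    have hcont : ∀ᶠ y in nhds xstar, ‖A y - A xstar‖ < ε / 2 := by
      have ht : Tendsto (fun y => ‖A y - A xstar‖) (nhds xstar) (nhds ‖A xstar - A xstar‖) :=
        ((hAc.sub continuous_const).norm).continuousAt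
      simp only [sub_self, norm_zero] at ht
      exact ht.eventually_lt_const (by linarith)
    obtain ⟨r₀, hr₀, h⟩ := Metric.eventually_nhds_iff_ball.mp hcont
    refine ⟨min (r₀ / 2) δ₁, by positivity, min_le_right _ _, ?_⟩
    intro x hx xp hrel
    have hsub : closedBall xstar (min (r₀ / 2) δ₁) ⊆ ball xstar r₀ := fun y hy =>
      mem_ball.mpr (lt_of_le_of_lt (le_trans (mem_closedBall.mp hy) (min_le_left _ _))
        (by linarith))
    have hbound : ∀ y ∈ closedBall xstar (min (r₀ / 2) δ₁), ‖A y - A x‖ ≤ ε := by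
      intro y hy
      have h1 := h y (hsub hy)
      have h2 := h x (hsub hx)
      calc ‖A y - A x‖ = ‖(A y - A xstar) - (A x - A xstar)‖ := by abel_nf
        _ ≤ ‖A y - A xstar‖ + ‖A x - A xstar‖ := norm_sub_le _ _
        _ ≤ ε := by linarith
    have hmv := Convex.norm_image_sub_le_of_norm_hasFDerivWithin_le'
      (fun y _ => (hGd y).hasFDerivWithinAt) hbound (convex_closedBall xstar _)
      hx (mem_closedBall_self (by positivity))
    have hmv' : ‖A x (x - xstar) - G x‖ ≤ ε * ‖x - xstar‖ := by
      have e1 : G xstar - G x - (A x) (xstar - x) = A x (x - xstar) - G x := by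
        rw [hG0, map_sub, map_sub]; abel
      rw [e1, norm_sub_rev xstar x] at hmv
      exact hmv
    obtain ⟨hux, hCx⟩ := hδ₁ x (closedBall_subset_closedBall (min_le_right _ _) hx)
    have hBA : ∀ v, Ring.inverse (A x) (A x v) = v := fun v => by
      rw [← ContinuousLinearMap.mul_apply, Ring.inverse_mul_cancel _ hux,
        ContinuousLinearMap.one_apply]
    have e2 : xp - xstar = Ring.inverse (A x) (A x (x - xstar) - G x) := by
      rw [← hrel, map_sub, hBA, hBA]; abel
    calc ‖xp - xstar‖ = ‖Ring.inverse (A x) (A x (x - xstar) - G x)‖ := by rw [e2]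
      _ ≤ ‖Ring.inverse (A x)‖ * ‖A x (x - xstar) - G x‖ := ContinuousLinearMap.le_opNorm _ _
      _ ≤ C * (ε * ‖x - xstar‖) := mul_le_mul hCx hmv' (norm_nonneg _) hCpos.le
      _ = C * ε * ‖x - xstar‖ := (mul_assoc _ _ _).symm
  obtain ⟨δ, hδpos, hδle, hkey⟩ := key (1 / (2 * C)) (by positivity)
  have hCε : C * (1 / (2 * C)) = 1 / 2 := by field_simp
  refine ⟨δ, hδpos, ?_⟩
  intro x0 hx0 xs hxs0 hrel
  have hmem : ∀ k, xs k ∈ closedBall xstar δ := by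
    intro k
    induction k with
    | zero => rw [hxs0]; exact hx0
    | succ k ih =>
      have h1 := hkey (xs k) ih (xs (k + 1)) (hrel k)
      rw [hCε] at h1
      have h2 : ‖xs k - xstar‖ ≤ δ := by rw [← dist_eq_norm]; exact mem_closedBall.mp ih
      rw [mem_closedBall, dist_eq_norm]
      nlinarith [norm_nonneg (xs k - xstar)]
  have hstep : ∀ k, ‖xs (k + 1) - xstar‖ ≤ (1 / 2) * ‖xs k - xstar‖ := by
    intro k
    have h1 := hkey (xs k) (hmem k) (xs (k + 1)) (hrel k)
    rwa [hCε] at h1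
  have hgeo : ∀ k, ‖xs k - xstar‖ ≤ δ * (1 / 2) ^ k := by
    intro k
    induction k with
    | zero =>
      have : ‖xs 0 - xstar‖ ≤ δ := by rw [← dist_eq_norm]; exact mem_closedBall.mp (hmem 0)
      simpa using this
    | succ k ih =>
      calc ‖xs (k + 1) - xstar‖ ≤ (1 / 2) * ‖xs k - xstar‖ := hstep k
        _ ≤ (1 / 2) * (δ * (1 / 2) ^ k) := by linarith
        _ = δ * (1 / 2) ^ (k + 1) := by ring
  have htend : Tendsto xs atTop (nhds xstar) := by
    rw [tendsto_iff_dist_tendsto_zero]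
    have hg : Tendsto (fun k : ℕ => δ * (1 / 2) ^ k) atTop (nhds 0) := by
      simpa using (tendsto_pow_atTop_nhds_zero_of_lt_one (by norm_num) (by norm_num)
        (r := (1 / 2 : ℝ))).const_mul δ
    exact squeeze_zero (fun k => dist_nonneg) (fun k => by rw [dist_eq_norm]; exact hgeo k) hg
  refine ⟨fun k => clm_bijective_of_isUnit _
    (hδ₁ (xs k) (closedBall_subset_closedBall hδle (hmem k))).1, hmem, htend, ?_⟩
  rw [Metric.tendsto_atTop]
  intro ε' hε'
  obtain ⟨r, hrpos, hrle, hkey'⟩ := key (ε' / (2 * C)) (by positivity)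
  have hCε' : C * (ε' / (2 * C)) = ε' / 2 := by field_simp
  obtain ⟨N, hN⟩ := Metric.tendsto_atTop.mp htend r hrpos
  refine ⟨N, fun k hk => ?_⟩
  have hmemr : xs k ∈ closedBall xstar r := mem_closedBall.mpr (hN k hk).le
  have h1 := hkey' (xs k) hmemr (xs (k + 1)) (hrel k)
  rw [hCε'] at h1
  have hratio : ‖xs (k + 1) - xstar‖ / ‖xs k - xstar‖ ≤ ε' / 2 := by
    rcases eq_or_lt_of_le (norm_nonneg (xs k - xstar)) with h0 | h0
    · rw [← h0, div_zero]; positivity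
    · exact (div_le_iff₀ h0).mpr (by linarith)
  have hnn : 0 ≤ ‖xs (k + 1) - xstar‖ / ‖xs k - xstar‖ := by positivity
  rw [Real.dist_eq, sub_zero, abs_of_nonneg hnn]
  linarith

/-- Local Q-superlinear convergence of the nonlinearly preconditioned Newton method
`x^{k+1} = x^k − H(x^k)⁻¹ g(x^k)`, where `g(x) = ∇φ*(∇f(x))` and
`H(x) = ∇²φ*(∇f(x)) ∇²f(x)`, near a strong local minimum `x⋆` of `f`, for a twice
continuously differentiable `φ*` (here `ψ`) with `∇ψ(0) = 0` and `∇²ψ(0) ≻ 0`.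
The Newton iteration is encoded by the relation `H(x^k) (x^k − x^{k+1}) = g(x^k)`
together with the asserted invertibility (bijectivity) of `H(x^k)`. -/
theorem preconditioned_newton_local_superlinear {n : ℕ}
    (f : EuclideanSpace ℝ (Fin n) → ℝ) (hf : ContDiff ℝ 2 f)
    (Hf : EuclideanSpace ℝ (Fin n) → EuclideanSpace ℝ (Fin n) →L[ℝ] EuclideanSpace ℝ (Fin n))
    (hHf : ∀ x, HasFDerivAt (gradient f) (Hf x) x) (hHfc : Continuous Hf)
    (xstar : EuclideanSpace ℝ (Fin n)) (hstat : gradient f xstar = 0)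
    (μf : ℝ) (hμf : 0 < μf)
    (hPD : ∀ v : EuclideanSpace ℝ (Fin n), μf * ‖v‖ ^ 2 ≤ (inner ℝ v (Hf xstar v) : ℝ))
    (ψ : EuclideanSpace ℝ (Fin n) → ℝ) (hψ : ContDiff ℝ 2 ψ)
    (Hψ : EuclideanSpace ℝ (Fin n) → EuclideanSpace ℝ (Fin n) →L[ℝ] EuclideanSpace ℝ (Fin n))
    (hHψ : ∀ y, HasFDerivAt (gradient ψ) (Hψ y) y) (hHψc : Continuous Hψ)
    (hψ0 : gradient ψ 0 = 0)
    (hψPD : ∀ v : EuclideanSpace ℝ (Fin n), v ≠ 0 → 0 < (inner ℝ v (Hψ 0 v) : ℝ)) :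
    ∃ δ > 0, ∀ x0 ∈ Metric.closedBall xstar δ,
      ∀ xs : ℕ → EuclideanSpace ℝ (Fin n), xs 0 = x0 →
      (∀ k, ((Hψ (gradient f (xs k))).comp (Hf (xs k))) (xs k - xs (k + 1)) =
        gradient ψ (gradient f (xs k))) →
      (∀ k, Function.Bijective ((Hψ (gradient f (xs k))).comp (Hf (xs k)))) ∧
      (∀ k, xs k ∈ Metric.closedBall xstar δ) ∧
      Tendsto xs atTop (nhds xstar) ∧
      Tendsto (fun k => ‖xs (k + 1) - xstar‖ / ‖xs k - xstar‖) atTop (nhds 0) := by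
  have hgradc : Continuous (gradient f) :=
    continuous_iff_continuousAt.mpr fun x => (hHf x).continuousAt
  have hAc : Continuous (fun x => (Hψ (gradient f x)).comp (Hf x)) :=
    (hHψc.comp hgradc).clm_comp hHfc
  have hGd : ∀ x, HasFDerivAt (fun x => gradient ψ (gradient f x))
      ((Hψ (gradient f x)).comp (Hf x)) x :=
    fun x => (hHψ (gradient f x)).comp x (hHf x)
  have hG0 : gradient ψ (gradient f xstar) = 0 := by rw [hstat, hψ0]
  have hinj : Function.Injective ((Hψ (gradient f xstar)).comp (Hf xstar)) := by
    have key0 : ∀ v, ((Hψ (gradient f xstar)).comp (Hf xstar)) v = 0 → v = 0 := by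
      intro v hv
      by_contra hne
      have h1 : Hf xstar v ≠ 0 := by
        intro h
        have h2 := hPD v
        rw [h, inner_zero_right] at h2
        have h3 : 0 < ‖v‖ := norm_pos_iff.mpr hne
        nlinarith [mul_pos hμf (pow_pos h3 2)]
      have h2 := hψPD (Hf xstar v) h1
      rw [ContinuousLinearMap.comp_apply, hstat] at hv
      rw [hv, inner_zero_right] at h2
      exact lt_irrefl 0 h2
    intro a b hab
    have := key0 (a - b) (by rw [map_sub, hab, sub_self])
    exact sub_eq_zero.mp this
  exact newton_aux _ _ hGd hAc xstar hG0 hinj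
end

section
/- Let f : ℝⁿ → ℝ be twice continuously differentiable, let x⋆ ∈ ℝⁿ satisfy ∇f(x⋆) = 0 and ∇²f(x⋆) ⪰ μ_f I for some μ_f > 0, and let φ* : ℝⁿ → ℝ be twice continuously differentiable with ∇φ*(0) = 0 and ∇²φ*(0) = (1/L̃) I for some L̃ > 0. Define g(x) = ∇φ*(∇f(x)) and H(x) = ∇²φ*(∇f(x)) ∇²f(x), and assume H is L_H-Lipschitz continuous on ℝⁿ with L_H > 0, i.e., ‖H(x) − H(y)‖ ≤ L_H ‖x − y‖ (spectral norm) for all x, y. If ‖x⁰ − x⋆‖ ≤ 2 μ_f / (3 L̃ L_H), then the sequence defined by x^{k+1} = x^k − H(x^k)^{-1} g(x^k) is well defined (each H(x^k) is invertible), satisfies ‖x^k − x⋆‖ ≤ 2 μ_f / (3 L̃ L_H) for all k, and converges Q-quadratically: for all k ≥ 0, ‖x^{k+1} − x⋆‖ ≤ L̃ L_H ‖x^k − x⋆‖² / (2 (μ_f − L̃ L_H ‖x^k − x⋆‖)). -/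
open Set

/-- Quadratic Taylor remainder bound for a function with Lipschitz derivative. -/
lemma taylor_quad_aux {E : Type*} [NormedAddCommGroup E] [NormedSpace ℝ E]
    {g : E → E} {H : E → (E →L[ℝ] E)} (hg : ∀ x, HasFDerivAt g (H x) x)
    {L : ℝ} (hLip : ∀ x y, ‖H x - H y‖ ≤ L * ‖x - y‖) (x y : E) :
    ‖g x - g y - H y (x - y)‖ ≤ L / 2 * ‖x - y‖ ^ 2 := by
  set p : ℝ → E := fun t => y + t • (x - y) with hp
  have hpder : ∀ t : ℝ, HasDerivAt p (x - y) t := by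
    intro t
    have := ((hasDerivAt_id t).smul_const (x - y)).const_add y
    simpa [p] using this
  set F : ℝ → E := fun t => g (p t) - g y - t • (H y (x - y)) with hF
  set F' : ℝ → E := fun t => H (p t) (x - y) - H y (x - y) with hF'
  have hFder : ∀ t : ℝ, HasDerivAt F (F' t) t := by
    intro t
    have h1 : HasDerivAt (fun t => g (p t)) (H (p t) (x - y)) t :=
      (hg (p t)).comp_hasDerivAt t (hpder t)
    have h2 : HasDerivAt (fun t : ℝ => t • (H y (x - y))) (H y (x - y)) t := by
      simpa using (hasDerivAt_id t).smul_const (H y (x - y))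
    exact (h1.sub_const (g y)).sub h2
  set B : ℝ → ℝ := fun t => L * ‖x - y‖ ^ 2 * (t ^ 2 / 2) with hB
  have hBder : ∀ t : ℝ, HasDerivAt B (L * ‖x - y‖ ^ 2 * t) t := by
    intro t
    have h := ((hasDerivAt_pow 2 t).div_const 2).const_mul (L * ‖x - y‖ ^ 2)
    simpa [B, mul_comm, mul_assoc, mul_left_comm] using h
  have bound : ∀ t ∈ Ico (0 : ℝ) 1, ‖F' t‖ ≤ L * ‖x - y‖ ^ 2 * t := by
    intro t ht
    have h1 : ‖F' t‖ ≤ ‖H (p t) - H y‖ * ‖x - y‖ := by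
      have := (H (p t) - H y).le_opNorm (x - y)
      simpa [F', ContinuousLinearMap.sub_apply] using this
    have h2 : ‖H (p t) - H y‖ ≤ L * (t * ‖x - y‖) := by
      have hl := hLip (p t) y
      have hpt : p t - y = t • (x - y) := by simp [p]
      calc ‖H (p t) - H y‖ ≤ L * ‖p t - y‖ := hl
        _ = L * (|t| * ‖x - y‖) := by rw [hpt, norm_smul]; simp
        _ = L * (t * ‖x - y‖) := by rw [abs_of_nonneg ht.1]
    calc ‖F' t‖ ≤ ‖H (p t) - H y‖ * ‖x - y‖ := h1
      _ ≤ L * (t * ‖x - y‖) * ‖x - y‖ :=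
          mul_le_mul_of_nonneg_right h2 (norm_nonneg _)
      _ = L * ‖x - y‖ ^ 2 * t := by ring
  have hcont : ContinuousOn F (Icc (0 : ℝ) 1) :=
    fun t _ => (hFder t).continuousAt.continuousWithinAt
  have key := image_norm_le_of_norm_deriv_right_le_deriv_boundary hcont
    (fun t _ => (hFder t).hasDerivWithinAt) (by simp [F, B, p]) hBder bound
  have h1 : (1 : ℝ) ∈ Icc (0 : ℝ) 1 := by constructor <;> norm_num
  have h2 := key h1
  have e1 : F 1 = g x - g y - H y (x - y) := by
    show g (p 1) - g y - (1:ℝ) • (H y (x - y)) = _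
    have : p 1 = x := by simp [p]
    rw [this, one_smul]
  have e2 : B 1 = L / 2 * ‖x - y‖ ^ 2 := by
    show L * ‖x - y‖ ^ 2 * ((1:ℝ) ^ 2 / 2) = _
    ring
  rw [e1, e2] at h2
  exact h2

set_option maxHeartbeats 1000000 in
/-- Local Q-quadratic convergence of the nonlinearly preconditioned Newton method
`x^{k+1} = x^k − H(x^k)⁻¹ g(x^k)`, where `g(x) = ∇φ*(∇f(x))` and
`H(x) = ∇²φ*(∇f(x)) ∇²f(x)`, near a strong local minimum `x⋆`, when `H` is
`L_H`-Lipschitz continuous, `∇²φ*(0) = (1/L̃) I`, and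
`‖x⁰ − x⋆‖ ≤ 2μ_f/(3 L̃ L_H)`. The iteration is encoded by the relation
`H(x^k) (x^k − x^{k+1}) = g(x^k)` and the asserted bijectivity of `H(x^k)`. -/
theorem preconditioned_newton_local_quadratic {n : ℕ}
    (f : EuclideanSpace ℝ (Fin n) → ℝ) (hf : ContDiff ℝ 2 f)
    (Hf : EuclideanSpace ℝ (Fin n) → EuclideanSpace ℝ (Fin n) →L[ℝ] EuclideanSpace ℝ (Fin n))
    (hHf : ∀ x, HasFDerivAt (gradient f) (Hf x) x) (hHfc : Continuous Hf)
    (xstar : EuclideanSpace ℝ (Fin n)) (hstat : gradient f xstar = 0)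
    (μf : ℝ) (hμf : 0 < μf)
    (hPD : ∀ v : EuclideanSpace ℝ (Fin n), μf * ‖v‖ ^ 2 ≤ (inner ℝ v (Hf xstar v) : ℝ))
    (ψ : EuclideanSpace ℝ (Fin n) → ℝ) (hψ : ContDiff ℝ 2 ψ)
    (Hψ : EuclideanSpace ℝ (Fin n) → EuclideanSpace ℝ (Fin n) →L[ℝ] EuclideanSpace ℝ (Fin n))
    (hHψ : ∀ y, HasFDerivAt (gradient ψ) (Hψ y) y) (hHψc : Continuous Hψ)
    (hψ0 : gradient ψ 0 = 0)
    (Ltil : ℝ) (hLtil : 0 < Ltil)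
    (hψI : Hψ 0 = (1 / Ltil) • ContinuousLinearMap.id ℝ (EuclideanSpace ℝ (Fin n)))
    (L_H : ℝ) (hLH : 0 < L_H)
    (hLip : ∀ x y, ‖(Hψ (gradient f x)).comp (Hf x) - (Hψ (gradient f y)).comp (Hf y)‖
      ≤ L_H * ‖x - y‖) :
    ∀ x0 : EuclideanSpace ℝ (Fin n), ‖x0 - xstar‖ ≤ 2 * μf / (3 * Ltil * L_H) →
      ∀ xs : ℕ → EuclideanSpace ℝ (Fin n), xs 0 = x0 →
      (∀ k, ((Hψ (gradient f (xs k))).comp (Hf (xs k))) (xs k - xs (k + 1)) =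
        gradient ψ (gradient f (xs k))) →
      (∀ k, Function.Bijective ((Hψ (gradient f (xs k))).comp (Hf (xs k)))) ∧
      (∀ k, ‖xs k - xstar‖ ≤ 2 * μf / (3 * Ltil * L_H)) ∧
      (∀ k, ‖xs (k + 1) - xstar‖ ≤
        Ltil * L_H * ‖xs k - xstar‖ ^ 2 / (2 * (μf - Ltil * L_H * ‖xs k - xstar‖))) := by
  intro x0 hx0 xs hxs0 hiter
  set H : EuclideanSpace ℝ (Fin n) → (EuclideanSpace ℝ (Fin n) →L[ℝ] EuclideanSpace ℝ (Fin n)) :=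
    fun x => (Hψ (gradient f x)).comp (Hf x) with hHdef
  set g : EuclideanSpace ℝ (Fin n) → EuclideanSpace ℝ (Fin n) :=
    fun x => gradient ψ (gradient f x) with hgdef
  have hLip' : ∀ a b, ‖H a - H b‖ ≤ L_H * ‖a - b‖ := hLip
  have hiter' : ∀ k, H (xs k) (xs k - xs (k + 1)) = g (xs k) := hiter
  set r : ℝ := 2 * μf / (3 * Ltil * L_H) with hr
  have hgder : ∀ x, HasFDerivAt g (H x) x := fun x =>
    (hHψ (gradient f x)).comp x (hHf x)
  have hgstar : g xstar = 0 := by simp [g, hstat, hψ0]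
  -- coercivity at xstar
  have hcstar : ∀ v : EuclideanSpace ℝ (Fin n), μf / Ltil * ‖v‖ ≤ ‖H xstar v‖ := by
    intro v
    have hHv : H xstar v = (1 / Ltil) • (Hf xstar v) := by
      show (Hψ (gradient f xstar)) ((Hf xstar) v) = _
      rw [hstat, hψI]
      simp
    have hinner : μf / Ltil * ‖v‖ ^ 2 ≤ (inner ℝ v (H xstar v) : ℝ) := by
      rw [hHv, real_inner_smul_right]
      have h := mul_le_mul_of_nonneg_left (hPD v) (by positivity : (0:ℝ) ≤ 1 / Ltil)
      calc μf / Ltil * ‖v‖ ^ 2 = 1 / Ltil * (μf * ‖v‖ ^ 2) := by ring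
        _ ≤ 1 / Ltil * (inner ℝ v (Hf xstar v) : ℝ) := h
    have hCS : (inner ℝ v (H xstar v) : ℝ) ≤ ‖v‖ * ‖H xstar v‖ := real_inner_le_norm _ _
    rcases eq_or_ne v 0 with rfl | hv
    · simp
    · have hv0 : 0 < ‖v‖ := norm_pos_iff.mpr hv
      have h2 : μf / Ltil * ‖v‖ ^ 2 ≤ ‖v‖ * ‖H xstar v‖ := hinner.trans hCS
      nlinarith
  -- coercivity near xstar
  have hcoer : ∀ x v : EuclideanSpace ℝ (Fin n), (μf / Ltil - L_H * ‖x - xstar‖) * ‖v‖ ≤ ‖H x v‖ := by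
    intro x v
    have h1 : ‖H xstar v - H x v‖ ≤ L_H * ‖x - xstar‖ * ‖v‖ := by
      have h2 : ‖H xstar - H x‖ ≤ L_H * ‖xstar - x‖ := hLip' xstar x
      rw [norm_sub_rev xstar x] at h2
      calc ‖H xstar v - H x v‖ = ‖(H xstar - H x) v‖ := by
            simp [ContinuousLinearMap.sub_apply]
        _ ≤ ‖H xstar - H x‖ * ‖v‖ := (H xstar - H x).le_opNorm v
        _ ≤ L_H * ‖x - xstar‖ * ‖v‖ :=
            mul_le_mul_of_nonneg_right h2 (norm_nonneg v)
    have h3 : ‖H xstar v‖ - ‖H xstar v - H x v‖ ≤ ‖H x v‖ := by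
      have := norm_sub_norm_le (H xstar v) (H xstar v - H x v)
      simpa using this
    have := hcstar v
    nlinarith [norm_nonneg v]
  have hμL : μf / Ltil * Ltil = μf := div_mul_cancel₀ μf hLtil.ne'
  have hrmul : r * (3 * Ltil * L_H) = 2 * μf := div_mul_cancel₀ _ (by positivity)
  -- positivity of the coercivity constant on the ball
  have hcpos : ∀ x : EuclideanSpace ℝ (Fin n), ‖x - xstar‖ ≤ r →
      μf / (3 * Ltil) ≤ μf / Ltil - L_H * ‖x - xstar‖ := by
    intro x hx
    have h1 : L_H * ‖x - xstar‖ ≤ L_H * r := mul_le_mul_of_nonneg_left hx hLH.le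
    have h2 : μf / (3 * Ltil) * (3 * Ltil) = μf := div_mul_cancel₀ μf (by positivity)
    nlinarith
  have hden : ∀ x : EuclideanSpace ℝ (Fin n), ‖x - xstar‖ ≤ r → 0 < 2 * (μf - Ltil * L_H * ‖x - xstar‖) := by
    intro x hx
    have h1 : L_H * ‖x - xstar‖ ≤ L_H * r := mul_le_mul_of_nonneg_left hx hLH.le
    nlinarith
  -- the quadratic step bound
  have hstep : ∀ k, ‖xs k - xstar‖ ≤ r →
      ‖xs (k + 1) - xstar‖ ≤
        Ltil * L_H * ‖xs k - xstar‖ ^ 2 / (2 * (μf - Ltil * L_H * ‖xs k - xstar‖)) := by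
    intro k hk
    set x := xs k with hx
    set x' := xs (k + 1) with hx'
    have hiterk : H x (x - x') = g x := hiter' k
    have e : H x (x' - xstar) = g xstar - g x - H x (xstar - x) := by
      rw [hgstar, ← hiterk]
      have hd : x' - xstar = -(x - x') - (xstar - x) := by abel
      rw [hd, map_sub, map_neg]
      abel
    have key : ‖H x (x' - xstar)‖ ≤ L_H / 2 * ‖x - xstar‖ ^ 2 := by
      rw [e]
      have := taylor_quad_aux hgder (fun a b => hLip a b) xstar x
      rwa [norm_sub_rev xstar x] at this
    have hlow := hcoer x (x' - xstar)
    have h5 : (μf / Ltil - L_H * ‖x - xstar‖) * ‖x' - xstar‖ ≤ L_H / 2 * ‖x - xstar‖ ^ 2 :=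
      hlow.trans key
    rw [le_div_iff₀ (hden x hk)]
    nlinarith [mul_le_mul_of_nonneg_left h5 (by positivity : (0:ℝ) ≤ 2 * Ltil),
      norm_nonneg (x' - xstar), norm_nonneg (x - xstar)]
  -- the quadratic bound implies the next iterate stays in the ball
  have hcontract : ∀ δ : ℝ, 0 ≤ δ → δ ≤ r →
      Ltil * L_H * δ ^ 2 / (2 * (μf - Ltil * L_H * δ)) ≤ δ := by
    intro δ hδ0 hδr
    have h1 : L_H * δ ≤ L_H * r := mul_le_mul_of_nonneg_left hδr hLH.le
    have hdpos : 0 < 2 * (μf - Ltil * L_H * δ) := by nlinarith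
    rw [div_le_iff₀ hdpos]
    nlinarith [mul_le_mul_of_nonneg_left hδr (by positivity : (0:ℝ) ≤ 3 * Ltil * L_H * δ)]
  -- all iterates stay in the ball
  have hball : ∀ k, ‖xs k - xstar‖ ≤ r := by
    intro k
    induction k with
    | zero => rw [hxs0]; exact hx0
    | succ k ih =>
      exact (hstep k ih).trans ((hcontract _ (norm_nonneg _) ih).trans ih)
  refine ⟨fun k => ?_, hball, fun k => hstep k (hball k)⟩
  -- bijectivity
  have hinj : Function.Injective (H (xs k)) := by
    intro a b hab
    have h := hcoer (xs k) (a - b)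
    rw [map_sub, hab, sub_self, norm_zero] at h
    have hc := hcpos (xs k) (hball k)
    have hp : 0 < μf / (3 * Ltil) := by positivity
    have hab0 : ‖a - b‖ ≤ 0 := by nlinarith [norm_nonneg (a - b)]
    have h0 : a - b = 0 := norm_le_zero_iff.mp hab0
    exact sub_eq_zero.mp h0
  have hsurj : Function.Surjective (H (xs k)) :=
    (LinearMap.injective_iff_surjective (f := (H (xs k)).toLinearMap)).mp hinj
  exact ⟨hinj, hsurj⟩
end

section
/- Let f : ℝⁿ → ℝ be twice continuously differentiable and L-anisotropically smooth relative to φ with L > 0, where φ : ℝⁿ → ℝ ∪ {+∞} is proper, lower semicontinuous, strongly convex, even, with φ(0) = 0, φ ≥ 0, and φ* differentiable. Let x⋆ ∈ ℝⁿ satisfy ∇f(x⋆) = 0 and ∇²f(x⋆) ≻ 0. Let γ = α/L with α ∈ (0,1) and let σ ∈ (0,1). Suppose {x^k} is a sequence with x^k → x⋆, x^k ≠ x⋆ for all k, and {d^k} is a sequence of directions satisfying ‖x^k + d^k − x⋆‖ / ‖x^k − x⋆‖ → 0. Then there exists K ∈ ℕ such that for all k ≥ K: f(x^k + d^k) − f(x^k)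 ≤ −γ σ φ(∇φ*(∇f(x^k))), i.e., the unit linesearch stepsize τ_k = 1 is accepted for all sufficiently large k. -/
open Filter

/-- The Fenchel (convex) conjugate of an extended-real-valued function on `ℝⁿ`. -/
noncomputable def fenchelConj {n : ℕ} (φ : EuclideanSpace ℝ (Fin n) → EReal)
    (y : EuclideanSpace ℝ (Fin n)) : EReal :=
  ⨆ x : EuclideanSpace ℝ (Fin n), (((inner ℝ y x : ℝ) : EReal) - φ x)

/-- Convexity for extended-real-valued functions, via the secant inequality. -/
def ERealConvexFn {n : ℕ} (ψ : EuclideanSpace ℝ (Fin n) → EReal) : Prop :=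
  ∀ x y : EuclideanSpace ℝ (Fin n), ∀ t : ℝ, 0 ≤ t → t ≤ 1 →
    ψ (t • x + (1 - t) • y) ≤ (t : EReal) * ψ x + ((1 - t : ℝ) : EReal) * ψ y

/-- `φ` is `μ`-strongly convex if `φ − (μ/2)‖·‖²` is convex. -/
def StronglyConvexEReal {n : ℕ} (μ : ℝ) (φ : EuclideanSpace ℝ (Fin n) → EReal) : Prop :=
  ERealConvexFn (fun x => φ x - ((μ / 2 * ‖x‖ ^ 2 : ℝ) : EReal))

/-- `f` is `L`-anisotropically smooth relative to `φ` (with `gradConj = ∇φ*`). -/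
def AnisoSmooth {n : ℕ} (L : ℝ) (f : EuclideanSpace ℝ (Fin n) → ℝ)
    (φ : EuclideanSpace ℝ (Fin n) → EReal)
    (gradConj : EuclideanSpace ℝ (Fin n) → EuclideanSpace ℝ (Fin n)) : Prop :=
  ∀ x xb : EuclideanSpace ℝ (Fin n),
    ((f x : ℝ) : EReal) ≤ ((f xb : ℝ) : EReal) +
      ((L⁻¹ : ℝ) : EReal) * φ (L • (x - (xb - L⁻¹ • gradConj (gradient f xb)))) -
      ((L⁻¹ : ℝ) : EReal) * φ (L • (xb - (xb - L⁻¹ • gradConj (gradient f xb))))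

section AuxLemmas
variable {n : ℕ}
local notation "E" => EuclideanSpace ℝ (Fin n)

lemma phi_lb {μ : ℝ} {φ : E → EReal}
    (hbot : ∀ x, φ x ≠ ⊥) (hsc : StronglyConvexEReal μ φ)
    (heven : ∀ x, φ (-x) = φ x) (hzero : φ 0 = 0) (x : E) :
    ((μ / 2 * ‖x‖ ^ 2 : ℝ) : EReal) ≤ φ x := by
  rcases eq_or_ne (φ x) ⊤ with h | h
  · simp [h]
  lift (φ x) to ℝ using ⟨h, hbot x⟩ with c hc
  have key := hsc x (-x) (1/2) (by norm_num) (by norm_num)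
  have hpt : (1/2 : ℝ) • x + (1 - 1/2 : ℝ) • (-x) = (0 : E) := by
    module
  rw [hpt] at key
  simp only [hzero, norm_zero] at key
  have hnn : ‖(-x : E)‖ = ‖x‖ := norm_neg x
  rw [heven x, ← hc, hnn] at key
  have : ((0:ℝ) : EReal) - ((μ / 2 * 0 ^ 2 : ℝ) : EReal) ≤
      ((1/2 : ℝ) : EReal) * ((c - μ / 2 * ‖x‖^2 : ℝ) : EReal) +
      ((1 - 1/2 : ℝ) : EReal) * ((c - μ / 2 * ‖x‖^2 : ℝ) : EReal) := by
    simpa [EReal.coe_sub] using key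
  rw [← EReal.coe_sub, ← EReal.coe_mul, ← EReal.coe_mul, ← EReal.coe_add,
    EReal.coe_le_coe_iff] at this
  rw [EReal.coe_le_coe_iff]
  nlinarith [this]

lemma phis_ge {φ : E → EReal} {φs : E → ℝ} (hφs : ∀ y, (φs y : EReal) = fenchelConj φ y)
    (y x : E) : ((inner ℝ y x : ℝ) : EReal) - φ x ≤ ((φs y : ℝ) : EReal) := by
  rw [hφs]; exact le_iSup (fun x => ((inner ℝ y x : ℝ) : EReal) - φ x) x

lemma phis_nonneg {φ : E → EReal} {φs : E → ℝ} (hφs : ∀ y, (φs y : EReal) = fenchelConj φ y)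
    (hzero : φ 0 = 0) (y : E) : 0 ≤ φs y := by
  have := phis_ge hφs y 0
  rw [inner_zero_right, hzero] at this
  simpa using (EReal.coe_le_coe_iff.mp (by simpa using this))

lemma phis_ub {μ : ℝ} (hμ : 0 < μ) {φ : E → EReal} {φs : E → ℝ}
    (hbot : ∀ x, φ x ≠ ⊥)
    (hφs : ∀ y, (φs y : EReal) = fenchelConj φ y)
    (hlb : ∀ x, ((μ / 2 * ‖x‖ ^ 2 : ℝ) : EReal) ≤ φ x) (y : E) :
    φs y ≤ ‖y‖ ^ 2 / (2 * μ) := by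
  rw [← EReal.coe_le_coe_iff, hφs]
  apply iSup_le
  intro x
  rcases eq_or_ne (φ x) ⊤ with h | h
  · rw [h, EReal.sub_top]; exact bot_le
  have hlbx := hlb x
  lift (φ x) to ℝ using ⟨h, hbot x⟩ with c hc
  rw [EReal.coe_le_coe_iff] at hlbx
  rw [← EReal.coe_sub, EReal.coe_le_coe_iff]
  have h1 : (inner ℝ y x : ℝ) ≤ ‖y‖ * ‖x‖ := real_inner_le_norm y x
  rw [le_div_iff₀ (by positivity : (0:ℝ) < 2 * μ)]
  nlinarith [sq_nonneg (μ * ‖x‖ - ‖y‖), norm_nonneg x, norm_nonneg y]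

lemma phis_convex {φ : E → EReal} {φs : E → ℝ}
    (hbot : ∀ x, φ x ≠ ⊥)
    (hφs : ∀ y, (φs y : EReal) = fenchelConj φ y) : ConvexOn ℝ Set.univ φs := by
  refine ⟨convex_univ, fun y1 _ y2 _ a b ha hb hab => ?_⟩
  rw [← EReal.coe_le_coe_iff, hφs]
  apply iSup_le
  intro x
  rcases eq_or_ne (φ x) ⊤ with h | h
  · rw [h, EReal.sub_top]; exact bot_le
  lift (φ x) to ℝ using ⟨h, hbot x⟩ with c hc
  rw [← EReal.coe_sub, EReal.coe_le_coe_iff]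
  have h1 : (inner ℝ y1 x : ℝ) - c ≤ φs y1 := by
    have := phis_ge hφs y1 x; rw [← hc, ← EReal.coe_sub] at this
    exact EReal.coe_le_coe_iff.mp this
  have h2 : (inner ℝ y2 x : ℝ) - c ≤ φs y2 := by
    have := phis_ge hφs y2 x; rw [← hc, ← EReal.coe_sub] at this
    exact EReal.coe_le_coe_iff.mp this
  have hin : (inner ℝ (a • y1 + b • y2) x : ℝ) = a * (inner ℝ y1 x : ℝ) + b * (inner ℝ y2 x : ℝ) := by
    rw [inner_add_left, real_inner_smul_left, real_inner_smul_left]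
  rw [hin]
  simp only [smul_eq_mul]
  have hcc : a * c + b * c = c := by rw [← add_mul, hab, one_mul]
  nlinarith [mul_le_mul_of_nonneg_left h1 ha, mul_le_mul_of_nonneg_left h2 hb]

lemma phis_grad_ineq {φs : E → ℝ} (hconv : ConvexOn ℝ Set.univ φs)
    (hdiff : Differentiable ℝ φs) (y v : E) :
    φs y + (inner ℝ (gradient φs y) v : ℝ) ≤ φs (y + v) := by
  set g : ℝ → ℝ := fun t => φs (y + t • v) with hg
  have hline : ∀ t : ℝ, HasDerivAt (fun s : ℝ => y + s • v) v t := by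
    intro t
    simpa using ((hasDerivAt_id t).smul_const v).const_add y
  have hgd : ∀ t : ℝ, HasDerivAt g ((inner ℝ (gradient φs (y + t • v)) v : ℝ)) t := by
    intro t
    have hgr : HasGradientAt φs (gradient φs (y + t • v)) (y + t • v) :=
      (hdiff _).hasGradientAt
    rw [hasGradientAt_iff_hasFDerivAt] at hgr
    have := hgr.comp_hasDerivAt t (hline t)
    simpa [hg, Function.comp_def] using this
  have hgc : ConvexOn ℝ Set.univ g := by
    refine ⟨convex_univ, fun t1 _ t2 _ a b ha hb hab => ?_⟩
    have key := hconv.2 (Set.mem_univ (y + t1 • v)) (Set.mem_univ (y + t2 • v)) ha hb hab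
    have heq : y + (a • t1 + b • t2) • v = a • (y + t1 • v) + b • (y + t2 • v) := by
      have h2 : a • (y + t1 • v) + b • (y + t2 • v) = (a + b) • y + (a * t1 + b * t2) • v := by
        module
      rw [h2, hab, one_smul]; simp [smul_eq_mul]
    rw [hg]
    simp only []
    rw [heq]
    exact key
  have := hgc.le_slope_of_hasDerivAt (Set.mem_univ (0:ℝ)) (Set.mem_univ (1:ℝ))
    zero_lt_one (hgd 0)
  rw [slope_def_field] at this
  have hg0 : g 0 = φs y := by simp [hg]
  have hg1 : g 1 = φs (y + v) := by simp [hg]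
  simp only [hg0, hg1] at this
  have : (inner ℝ (gradient φs y) v : ℝ) ≤ φs (y + v) - φs y := by
    simpa [hg0] using this
  linarith

lemma grad_norm_bound {μ : ℝ} (hμ : 0 < μ) {φs : E → ℝ}
    (hnn : ∀ y, 0 ≤ φs y) (hub : ∀ y, φs y ≤ ‖y‖ ^ 2 / (2 * μ))
    (hgi : ∀ y v, φs y + (inner ℝ (gradient φs y) v : ℝ) ≤ φs (y + v)) (y : E) :
    ‖gradient φs y‖ ≤ 3 * ‖y‖ / μ := by
  set u := gradient φs y with hu
  set a := ‖u‖; set b := ‖y‖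
  have key := hgi y (μ • u)
  have hinn : (inner ℝ u (μ • u) : ℝ) = μ * a ^ 2 := by
    rw [real_inner_smul_right, real_inner_self_eq_norm_sq]
  have hn1 : ‖y + μ • u‖ ≤ b + μ * a := by
    calc ‖y + μ • u‖ ≤ ‖y‖ + ‖μ • u‖ := norm_add_le _ _
    _ = b + μ * a := by rw [norm_smul, Real.norm_eq_abs, abs_of_pos hμ]
  have h2 : φs (y + μ • u) ≤ (b + μ * a) ^ 2 / (2 * μ) := by
    refine (hub _).trans ?_
    have h3 := pow_le_pow_left₀ (norm_nonneg _) hn1 2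
    exact div_le_div_of_nonneg_right h3 (by positivity)
  have h4 : μ * a ^ 2 ≤ (b + μ * a) ^ 2 / (2 * μ) := by
    have h5 := hnn y
    rw [← hu] at key
    rw [hinn] at key
    linarith [h2, key]
  rw [le_div_iff₀ (by positivity : (0:ℝ) < 2 * μ)] at h4
  have ha : 0 ≤ a := norm_nonneg _
  have hb : 0 ≤ b := norm_nonneg _
  rw [le_div_iff₀ hμ]
  nlinarith [sq_nonneg (μ * a - b), sq_nonneg (μ * a - 3 * b), mul_nonneg ha hb, sq_nonneg b,
    mul_nonneg (mul_nonneg hμ.le ha) hb]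

lemma aniso_step {L : ℝ} (hL : 0 < L) {f : E → ℝ} {φ : E → EReal} {φs : E → ℝ}
    (hzero : φ 0 = 0) (hbot : ∀ x, φ x ≠ ⊥) (hnonneg : ∀ z, 0 ≤ φ z)
    (haniso : AnisoSmooth L f φ (gradient φs)) (xb : E) :
    ∃ c : ℝ, φ (gradient φs (gradient f xb)) = (c : EReal) ∧ 0 ≤ c ∧
      f (xb - L⁻¹ • gradient φs (gradient f xb)) ≤ f xb - L⁻¹ * c := by
  set u := gradient φs (gradient f xb) with hu
  have h := haniso (xb - L⁻¹ • u) xb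
  have e1 : L • ((xb - L⁻¹ • u) - (xb - L⁻¹ • u)) = (0 : E) := by simp
  have e2 : L • (xb - (xb - L⁻¹ • u)) = u := by
    rw [sub_sub_cancel, smul_smul, mul_inv_cancel₀ hL.ne', one_smul]
  rw [e1, e2, hzero, mul_zero, add_zero] at h
  rcases eq_or_ne (φ u) ⊤ with htop | htop
  · rw [htop, EReal.coe_mul_top_of_pos (by positivity), EReal.sub_top] at h
    exact absurd h (by simp)
  lift (φ u) to ℝ using ⟨htop, hbot u⟩ with c hc
  refine ⟨c, rfl, ?_, ?_⟩
  · have := hnonneg u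
    rw [← hc] at this
    exact_mod_cast this
  · rw [← EReal.coe_mul, ← EReal.coe_sub, EReal.coe_le_coe_iff] at h
    exact h

lemma eigen_lb (Hf : E →L[ℝ] E)
    (hPD : ∀ v : E, v ≠ 0 → 0 < (inner ℝ v (Hf v) : ℝ)) (v0 : E) (hv0 : v0 ≠ 0) :
    ∃ m0 : ℝ, 0 < m0 ∧ ∀ v : E, m0 * ‖v‖ ^ 2 ≤ (inner ℝ v (Hf v) : ℝ) := by
  have hsc : IsCompact (Metric.sphere (0:E) 1) := isCompact_sphere 0 1
  have hsne : (Metric.sphere (0:E) 1).Nonempty := by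
    refine ⟨‖v0‖⁻¹ • v0, ?_⟩
    simp [norm_smul, norm_inv, inv_mul_cancel₀ (norm_ne_zero_iff.mpr hv0)]
  have hcont : Continuous fun v : E => (inner ℝ v (Hf v) : ℝ) :=
    continuous_inner.comp (continuous_id.prodMk Hf.continuous)
  obtain ⟨v1, hv1mem, hv1min⟩ := hsc.exists_isMinOn hsne hcont.continuousOn
  have hv1norm : ‖v1‖ = 1 := by simpa using hv1mem
  have hv1ne : v1 ≠ 0 := by intro h; rw [h] at hv1norm; simp at hv1norm
  refine ⟨(inner ℝ v1 (Hf v1) : ℝ), hPD v1 hv1ne, fun v => ?_⟩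
  rcases eq_or_ne v 0 with rfl | hv
  · simp
  · have hvn : ‖v‖ ≠ 0 := norm_ne_zero_iff.mpr hv
    set w := ‖v‖⁻¹ • v with hw
    have hwmem : w ∈ Metric.sphere (0:E) 1 := by
      simp [hw, norm_smul, inv_mul_cancel₀ hvn]
    have hmin : (inner ℝ v1 (Hf v1) : ℝ) ≤ (inner ℝ w (Hf w) : ℝ) := hv1min hwmem
    have hscale : (inner ℝ w (Hf w) : ℝ) = ‖v‖⁻¹ ^ 2 * (inner ℝ v (Hf v) : ℝ) := by
      rw [hw, map_smul, real_inner_smul_left, real_inner_smul_right]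
      ring
    rw [hscale] at hmin
    have h2 : (inner ℝ v1 (Hf v1) : ℝ) * ‖v‖ ^ 2 ≤ ‖v‖⁻¹ ^ 2 * (inner ℝ v (Hf v) : ℝ) * ‖v‖ ^ 2 :=
      mul_le_mul_of_nonneg_right hmin (by positivity)
    calc (inner ℝ v1 (Hf v1) : ℝ) * ‖v‖ ^ 2 ≤ _ := h2
      _ = (inner ℝ v (Hf v) : ℝ) := by
        field_simp

lemma quad_bounds {f : E → ℝ} (hf : ContDiff ℝ 2 f) {xstar : E}
    (hstat : gradient f xstar = 0)
    {Hf : E →L[ℝ] E} (hHf : HasFDerivAt (gradient f) Hf xstar) {m0 : ℝ} (hm0 : 0 < m0)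
    (heig : ∀ v : E, m0 * ‖v‖ ^ 2 ≤ (inner ℝ v (Hf v) : ℝ)) :
    ∃ r : ℝ, 0 < r ∧ ∀ z : E, ‖z - xstar‖ ≤ r →
      m0 / 4 * ‖z - xstar‖ ^ 2 ≤ f z - f xstar ∧
      f z - f xstar ≤ (‖Hf‖ + m0) / 2 * ‖z - xstar‖ ^ 2 := by
  have hdiff : Differentiable ℝ f := hf.differentiable (by norm_num)
  have hlo := hHf.isLittleO
  have hev := hlo.def (show (0:ℝ) < m0 / 2 by positivity)
  rw [Metric.eventually_nhds_iff_ball] at hev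
  obtain ⟨r0, hr0, hball⟩ := hev
  refine ⟨r0 / 2, by positivity, fun z hz => ?_⟩
  set Δ := z - xstar with hΔ
  have hgradcont : Continuous (gradient f) := by
    have h1 : Continuous (fderiv ℝ f) := hf.continuous_fderiv (by norm_num)
    exact (InnerProductSpace.toDual ℝ (EuclideanSpace ℝ (Fin n))).symm.continuous.comp h1
  have herr : ∀ t : ℝ, t ∈ Set.Icc (0:ℝ) 1 →
      ‖gradient f (xstar + t • Δ) - Hf (t • Δ)‖ ≤ m0 / 2 * (t * ‖Δ‖) := by
    intro t ht
    have hmem : xstar + t • Δ ∈ Metric.ball xstar r0 := by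
      rw [Metric.mem_ball, dist_eq_norm, add_sub_cancel_left, norm_smul,
        Real.norm_eq_abs, abs_of_nonneg ht.1]
      calc t * ‖Δ‖ ≤ 1 * ‖Δ‖ := mul_le_mul_of_nonneg_right ht.2 (norm_nonneg _)
        _ ≤ r0 / 2 := by rw [one_mul]; exact hz
        _ < r0 := by linarith
    have := hball _ hmem
    rw [hstat, sub_zero, add_sub_cancel_left, norm_smul, Real.norm_eq_abs,
      abs_of_nonneg ht.1] at this
    simpa [mul_assoc] using this
  set F : ℝ → ℝ := fun t => (inner ℝ (gradient f (xstar + t • Δ)) Δ : ℝ) with hF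
  have hgd : ∀ t : ℝ, HasDerivAt (fun s : ℝ => f (xstar + s • Δ)) (F t) t := by
    intro t
    have hline : HasDerivAt (fun s : ℝ => xstar + s • Δ) Δ t := by
      simpa using ((hasDerivAt_id t).smul_const Δ).const_add xstar
    have hgr : HasGradientAt f (gradient f (xstar + t • Δ)) (xstar + t • Δ) :=
      (hdiff _).hasGradientAt
    rw [hasGradientAt_iff_hasFDerivAt] at hgr
    simpa [hF, Function.comp_def] using hgr.comp_hasDerivAt t hline
  have hFcont : Continuous F :=
    (hgradcont.comp (continuous_const.add (continuous_id.smul continuous_const))).inner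
      continuous_const
  have hFTC : ∫ t in (0:ℝ)..1, F t = f z - f xstar := by
    have := intervalIntegral.integral_eq_sub_of_hasDerivAt
      (f := fun s : ℝ => f (xstar + s • Δ)) (f' := F)
      (fun t _ => hgd t) (hFcont.intervalIntegrable 0 1)
    simpa [hΔ] using this
  have hHfb : ∀ t : ℝ, t ∈ Set.Icc (0:ℝ) 1 →
      (inner ℝ (Hf (t • Δ)) Δ : ℝ) = t * (inner ℝ Δ (Hf Δ) : ℝ) := by
    intro t ht
    rw [map_smul, real_inner_smul_left, real_inner_comm]
  have hlow : ∀ t ∈ Set.Icc (0:ℝ) 1, (m0 / 2 * ‖Δ‖ ^ 2) * t ≤ F t := by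
    intro t ht
    have h1 : F t = (inner ℝ (Hf (t • Δ)) Δ : ℝ) +
        (inner ℝ (gradient f (xstar + t • Δ) - Hf (t • Δ)) Δ : ℝ) := by
      rw [inner_sub_left]; ring
    have h2 := herr t ht
    have h3 : |(inner ℝ (gradient f (xstar + t • Δ) - Hf (t • Δ)) Δ : ℝ)| ≤
        m0 / 2 * (t * ‖Δ‖) * ‖Δ‖ :=
      (abs_real_inner_le_norm _ _).trans (mul_le_mul_of_nonneg_right h2 (norm_nonneg _))
    have h4 := heig Δ
    rw [h1, hHfb t ht]
    have h5 : -(m0 / 2 * (t * ‖Δ‖) * ‖Δ‖) ≤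
        (inner ℝ (gradient f (xstar + t • Δ) - Hf (t • Δ)) Δ : ℝ) := neg_le_of_abs_le h3
    nlinarith [ht.1, mul_le_mul_of_nonneg_left h4 ht.1]
  have hup : ∀ t ∈ Set.Icc (0:ℝ) 1, F t ≤ ((‖Hf‖ + m0) * ‖Δ‖ ^ 2) * t := by
    intro t ht
    have h1 : F t = (inner ℝ (Hf (t • Δ)) Δ : ℝ) +
        (inner ℝ (gradient f (xstar + t • Δ) - Hf (t • Δ)) Δ : ℝ) := by
      rw [inner_sub_left]; ring
    have h2 := herr t ht
    have h3 : (inner ℝ (gradient f (xstar + t • Δ) - Hf (t • Δ)) Δ : ℝ) ≤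
        m0 / 2 * (t * ‖Δ‖) * ‖Δ‖ :=
      (le_abs_self _).trans ((abs_real_inner_le_norm _ _).trans
        (mul_le_mul_of_nonneg_right h2 (norm_nonneg _)))
    have h4 : (inner ℝ (Hf (t • Δ)) Δ : ℝ) ≤ t * (‖Hf‖ * ‖Δ‖ ^ 2) := by
      rw [hHfb t ht]
      have h5 : (inner ℝ Δ (Hf Δ) : ℝ) ≤ ‖Δ‖ * ‖Hf Δ‖ :=
        (real_inner_le_norm _ _)
      have h6 : ‖Hf Δ‖ ≤ ‖Hf‖ * ‖Δ‖ := Hf.le_opNorm Δ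
      have h7 : (inner ℝ Δ (Hf Δ) : ℝ) ≤ ‖Hf‖ * ‖Δ‖ ^ 2 := by
        nlinarith [norm_nonneg Δ, mul_le_mul_of_nonneg_left h6 (norm_nonneg Δ)]
      exact mul_le_mul_of_nonneg_left h7 ht.1
    rw [h1]
    nlinarith [ht.1, norm_nonneg Δ, hm0, mul_nonneg ht.1 (sq_nonneg ‖Δ‖)]
  have hint1 : (∫ t in (0:ℝ)..1, (m0 / 2 * ‖Δ‖ ^ 2) * t) = m0 / 4 * ‖Δ‖ ^ 2 := by
    rw [intervalIntegral.integral_const_mul, integral_id]; ring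
  have hint2 : (∫ t in (0:ℝ)..1, ((‖Hf‖ + m0) * ‖Δ‖ ^ 2) * t) = (‖Hf‖ + m0) / 2 * ‖Δ‖ ^ 2 := by
    rw [intervalIntegral.integral_const_mul, integral_id]; ring
  constructor
  · rw [← hFTC, ← hint1]
    exact intervalIntegral.integral_mono_on zero_le_one
      (((continuous_const.mul continuous_id).intervalIntegrable 0 1))
      (hFcont.intervalIntegrable 0 1) hlow
  · rw [← hFTC, ← hint2]
    exact intervalIntegral.integral_mono_on zero_le_one
      (hFcont.intervalIntegrable 0 1)
      (((continuous_const.mul continuous_id).intervalIntegrable 0 1)) hup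

end AuxLemmas

set_option maxHeartbeats 1000000 in
/-- Eventual acceptance of the unit stepsize in the globalized preconditioned
Newton method: if `x^k → x⋆` (a strong local minimum of the anisotropically
smooth `f`), `x^k ≠ x⋆`, and the directions `d^k` are superlinear, i.e.
`‖x^k + d^k − x⋆‖/‖x^k − x⋆‖ → 0`, then for all sufficiently large `k` the unit
step satisfies the sufficient decrease condition
`f(x^k + d^k) − f(x^k) ≤ −γ σ φ(∇φ*(∇f(x^k)))` with `γ = α/L`. -/
theorem eventual_unit_stepsize {n : ℕ} (μ : ℝ) (hμ : 0 < μ)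
    (φ : EuclideanSpace ℝ (Fin n) → EReal)
    (hproper_ne_top : ∃ x, φ x ≠ ⊤) (hproper_ne_bot : ∀ x, φ x ≠ ⊥)
    (hlsc : LowerSemicontinuous φ)
    (hsc : StronglyConvexEReal μ φ)
    (heven : ∀ x, φ (-x) = φ x) (hzero : φ 0 = 0)
    (hnonneg : ∀ z, 0 ≤ φ z)
    (φs : EuclideanSpace ℝ (Fin n) → ℝ)
    (hφs : ∀ y, (φs y : EReal) = fenchelConj φ y)
    (hφsdiff : Differentiable ℝ φs)
    (f : EuclideanSpace ℝ (Fin n) → ℝ) (hf : ContDiff ℝ 2 f)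
    (L : ℝ) (hL : 0 < L)
    (haniso : AnisoSmooth L f φ (gradient φs))
    (xstar : EuclideanSpace ℝ (Fin n)) (hstat : gradient f xstar = 0)
    (Hf : EuclideanSpace ℝ (Fin n) →L[ℝ] EuclideanSpace ℝ (Fin n))
    (hHf : HasFDerivAt (gradient f) Hf xstar)
    (hPD : ∀ v : EuclideanSpace ℝ (Fin n), v ≠ 0 → 0 < (inner ℝ v (Hf v) : ℝ))
    (α σ : ℝ) (hα : 0 < α) (hα' : α < 1) (hσ : 0 < σ) (hσ' : σ < 1)
    (x d : ℕ → EuclideanSpace ℝ (Fin n))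
    (hne : ∀ k, x k ≠ xstar)
    (hconv : Tendsto x atTop (nhds xstar))
    (hsuperlin : Tendsto (fun k => ‖x k + d k - xstar‖ / ‖x k - xstar‖) atTop (nhds 0)) :
    ∃ K : ℕ, ∀ k ≥ K, ((f (x k + d k) - f (x k) : ℝ) : EReal) ≤
      -((α / L * σ : ℝ) : EReal) * φ (gradient φs (gradient f (x k))) := by
  -- conjugate function properties
  have hlb := phi_lb hproper_ne_bot hsc heven hzero
  have hnn := phis_nonneg hφs hzero
  have hub := phis_ub hμ hproper_ne_bot hφs hlb
  have hconvx := phis_convex hproper_ne_bot hφs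
  have hgi := phis_grad_ineq hconvx hφsdiff
  have hgn : ∀ y, ‖gradient φs y‖ ≤ 3 * ‖y‖ / μ := grad_norm_bound hμ hnn hub hgi
  -- quadratic growth near xstar
  obtain ⟨m0, hm0, heig⟩ := eigen_lb Hf hPD (x 0 - xstar) (sub_ne_zero.mpr (hne 0))
  obtain ⟨r, hr, hquad⟩ := quad_bounds hf hstat hHf hm0 heig
  set m : ℝ := m0 / 4 with hm
  set M : ℝ := (‖Hf‖ + m0) / 2 with hM
  have hmpos : 0 < m := by positivity
  have hMpos : 0 < M := by
    have := norm_nonneg Hf; rw [hM]; positivity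
  set θ : ℝ := 1 - α * σ with hθdef
  have hθpos : 0 < θ := by nlinarith
  have hασ : 0 < α * σ := by positivity
  set δ : ℝ := min 1 (θ * m / M) with hδdef
  have hδpos : 0 < δ := lt_min one_pos (by positivity)
  -- convergence facts
  have h1 : Tendsto (fun k => ‖x k - xstar‖) atTop (nhds 0) := by
    have := (hconv.sub_const xstar).norm
    simpa using this
  have hratio_eq : ∀ k, ‖x k + d k - xstar‖ =
      (‖x k + d k - xstar‖ / ‖x k - xstar‖) * ‖x k - xstar‖ := by
    intro k
    rw [div_mul_cancel₀]
    exact norm_ne_zero_iff.mpr (sub_ne_zero.mpr (hne k))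
  have h2 : Tendsto (fun k => ‖x k + d k - xstar‖) atTop (nhds 0) := by
    have := hsuperlin.mul h1
    rw [mul_zero] at this
    exact this.congr fun k => (hratio_eq k).symm
  have hgradcont : Continuous (gradient f) := by
    have hc : Continuous (fderiv ℝ f) := hf.continuous_fderiv (by norm_num)
    exact (InnerProductSpace.toDual ℝ (EuclideanSpace ℝ (Fin n))).symm.continuous.comp hc
  have hyk : Tendsto (fun k => ‖gradient f (x k)‖) atTop (nhds 0) := by
    have := ((hgradcont.tendsto xstar).comp hconv)
    rw [hstat] at this
    simpa using this.norm
  have h3 : Tendsto (fun k => ‖(x k - L⁻¹ • gradient φs (gradient f (x k))) - xstar‖)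
      atTop (nhds 0) := by
    apply squeeze_zero (fun k => norm_nonneg _)
      (g := fun k => ‖x k - xstar‖ + L⁻¹ * (3 * ‖gradient f (x k)‖ / μ))
    · intro k
      have e : (x k - L⁻¹ • gradient φs (gradient f (x k))) - xstar =
          (x k - xstar) - L⁻¹ • gradient φs (gradient f (x k)) := by abel
      rw [e]
      refine (norm_sub_le _ _).trans ?_
      have : ‖L⁻¹ • gradient φs (gradient f (x k))‖ ≤ L⁻¹ * (3 * ‖gradient f (x k)‖ / μ) := by
        rw [norm_smul, Real.norm_eq_abs, abs_of_pos (by positivity : (0:ℝ) < L⁻¹)]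
        exact mul_le_mul_of_nonneg_left (hgn _) (by positivity)
      linarith
    · have := h1.add (((hyk.const_mul 3).div_const μ).const_mul L⁻¹)
      simpa using this
  -- eventual bounds
  have ev1 : ∀ᶠ k in atTop, ‖x k - xstar‖ ≤ r := h1.eventually_le_const hr
  have ev2 : ∀ᶠ k in atTop, ‖x k + d k - xstar‖ ≤ r := h2.eventually_le_const hr
  have ev3 : ∀ᶠ k in atTop,
      ‖(x k - L⁻¹ • gradient φs (gradient f (x k))) - xstar‖ ≤ r := h3.eventually_le_const hr
  have ev4 : ∀ᶠ k in atTop, ‖x k + d k - xstar‖ / ‖x k - xstar‖ ≤ δ :=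
    hsuperlin.eventually_le_const hδpos
  obtain ⟨K, hK⟩ := (((ev1.and ev2).and ev3).and ev4).exists_forall_of_atTop
  refine ⟨K, fun k hk => ?_⟩
  obtain ⟨⟨⟨hk1, hk2⟩, hk3⟩, hk4⟩ := hK k hk
  -- anisotropic descent step
  obtain ⟨c, hcφ, hc0, hdesc⟩ := aniso_step hL hzero hproper_ne_bot hnonneg haniso (x k)
  -- quadratic bounds
  have hq1 := (hquad _ hk1).1
  have hq2 := (hquad _ hk2).2
  have hq3 := (hquad _ hk3).1
  -- f at the prox point is at least f xstar
  have hzge : f xstar ≤ f (x k - L⁻¹ • gradient φs (gradient f (x k))) := by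
    nlinarith [sq_nonneg ‖(x k - L⁻¹ • gradient φs (gradient f (x k))) - xstar‖]
  have hcle : L⁻¹ * c ≤ f (x k) - f xstar := by linarith
  -- superlinear decrease
  have hΔne : ‖x k - xstar‖ ≠ 0 := norm_ne_zero_iff.mpr (sub_ne_zero.mpr (hne k))
  have hratio_nonneg : 0 ≤ ‖x k + d k - xstar‖ / ‖x k - xstar‖ := by positivity
  have hw2 : f (x k + d k) - f xstar ≤ θ * m * ‖x k - xstar‖ ^ 2 := by
    have e1 : ‖x k + d k - xstar‖ ^ 2 =
        (‖x k + d k - xstar‖ / ‖x k - xstar‖) ^ 2 * ‖x k - xstar‖ ^ 2 := by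
      rw [← mul_pow, ← hratio_eq]
    have hd1 : δ ≤ 1 := min_le_left _ _
    have hd2 : δ ≤ θ * m / M := min_le_right _ _
    have hsq : (‖x k + d k - xstar‖ / ‖x k - xstar‖) ^ 2 ≤ δ * δ := by
      have := mul_le_mul hk4 hk4 hratio_nonneg hδpos.le
      nlinarith
    have hMδ : M * (δ * δ) ≤ θ * m := by
      have h5 : M * δ ≤ θ * m := by
        have h6 := (le_div_iff₀ hMpos).mp hd2
        linarith
      nlinarith [mul_le_mul_of_nonneg_right h5 hδpos.le,
        mul_le_mul_of_nonneg_left hd1 (mul_pos hθpos hmpos).le]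
    calc f (x k + d k) - f xstar ≤ M * ‖x k + d k - xstar‖ ^ 2 := hq2
      _ = M * ((‖x k + d k - xstar‖ / ‖x k - xstar‖) ^ 2 * ‖x k - xstar‖ ^ 2) := by rw [← e1]
      _ ≤ M * (δ * δ) * ‖x k - xstar‖ ^ 2 := by
          nlinarith [mul_le_mul_of_nonneg_left
            (mul_le_mul_of_nonneg_right hsq (sq_nonneg ‖x k - xstar‖)) hMpos.le]
      _ ≤ θ * m * ‖x k - xstar‖ ^ 2 := by nlinarith [sq_nonneg ‖x k - xstar‖]
  have hfin : f (x k + d k) - f (x k) ≤ -(α / L * σ) * c := by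
    have hA : f (x k + d k) - f xstar ≤ θ * (f (x k) - f xstar) := by
      nlinarith [mul_le_mul_of_nonneg_left hq1 hθpos.le]
    have hB := mul_le_mul_of_nonneg_left hcle hασ.le
    have hco : α / L * σ * c = α * σ * (L⁻¹ * c) := by field_simp
    have hθX : θ * (f (x k) - f xstar) =
        (f (x k) - f xstar) - α * σ * (f (x k) - f xstar) := by rw [hθdef]; ring
    nlinarith [hA, hB, hco, hθX]
  rw [hcφ, ← EReal.coe_neg, ← EReal.coe_mul, EReal.coe_le_coe_iff]
  exact hfin
end

section
/- Let A ∈ ℝ^{n×n} be symmetric, M ∈ ℝ^{n×n} symmetric positive definite, g ∈ ℝⁿ with g ≠ 0, and σ > 0. Then there exists a pair (s⋆, λ⋆) ∈ ℝⁿ × ℝ satisfying simultaneously: (A + λ⋆ M) s⋆ = −M g, λ⋆ = σ ‖s⋆‖, and A + λ⋆ M ⪰ 0 (positive semidefinite). -/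
open Matrix Filter

theorem secular_core {n : ℕ} (T : (Fin n → ℝ) ≃L[ℝ] EuclideanSpace ℝ (Fin n))
    (d c : Fin n → ℝ) (σ : ℝ) (hσ : 0 < σ) :
    ∃ (y : Fin n → ℝ) (lam : ℝ),
      (∀ i, (d i + lam) * y i = -c i) ∧ lam = σ * ‖T y‖ ∧ (∀ i, 0 ≤ d i + lam) := by
  rcases isEmpty_or_nonempty (Fin n) with hn | hn
  · exact ⟨0, 0, fun i => hn.elim i, by simp, fun i => hn.elim i⟩
  -- lower bound for positive semidefiniteness
  set μ : ℝ := Finset.univ.sup' Finset.univ_nonempty (fun i => -d i) with hμdef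
  set lb : ℝ := max 0 μ with hlbdef
  have hlb0 : (0:ℝ) ≤ lb := le_max_left _ _
  have hdlb : ∀ i, 0 ≤ d i + lb := by
    intro i
    have h1 : -d i ≤ μ := Finset.le_sup' (fun i => -d i) (Finset.mem_univ i)
    have h2 : μ ≤ lb := le_max_right _ _
    linarith
  have hden : ∀ lam, lb < lam → ∀ i, lam - lb ≤ d i + lam := by
    intro lam h i; have := hdlb i; linarith
  set y : ℝ → Fin n → ℝ := fun lam i => -c i / (d i + lam) with hydef
  set N : ℝ → ℝ := fun lam => ‖T (y lam)‖ with hNdef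
  have heq : ∀ lam, lb < lam → ∀ i, (d i + lam) * y lam i = -c i := by
    intro lam h i
    have hne : d i + lam ≠ 0 := by have := hden lam h i; intro h'; rw [h'] at this; linarith
    simp only [hydef]
    field_simp
  have hycont : ContinuousOn y (Set.Ioi lb) := by
    rw [continuousOn_pi]
    intro i
    apply ContinuousOn.div continuousOn_const (by fun_prop)
    intro lam hl
    simp only [Set.mem_Ioi] at hl
    have := hden lam hl i
    intro h'; rw [h'] at this; linarith
  have hNcont : ContinuousOn N (Set.Ioi lb) :=
    (continuous_norm.comp T.continuous).comp_continuousOn hycont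
  by_cases hex : ∃ lam, lb < lam ∧ lam ≤ σ * N lam
  · -- easy case : IVT on lam
    obtain ⟨l1, hl1, hNl1⟩ := hex
    set C : ℝ := ‖(T : (Fin n → ℝ) →L[ℝ] EuclideanSpace ℝ (Fin n))‖ with hCdef
    have hC0 : 0 ≤ C := norm_nonneg _
    set l2 : ℝ := max l1 (lb + 1 + σ * C * ‖c‖) with hl2def
    have hl12 : l1 ≤ l2 := le_max_left _ _
    have hl2lb : lb + 1 + σ * C * ‖c‖ ≤ l2 := le_max_right _ _
    have hK0 : 0 ≤ σ * C * ‖c‖ := by positivity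
    have hl2 : σ * N l2 ≤ l2 := by
      have hl2lb' : lb < l2 := by linarith
      have hub : ‖y l2‖ ≤ ‖c‖ / (l2 - lb) := by
        apply (pi_norm_le_iff_of_nonneg (div_nonneg (norm_nonneg c) (by linarith))).2
        intro i
        have h1 : l2 - lb ≤ d i + l2 := hden l2 hl2lb' i
        have h2 : (0:ℝ) < l2 - lb := by linarith
        rw [Real.norm_eq_abs, hydef]
        simp only [abs_div, abs_neg]
        rw [abs_of_pos (by linarith : (0:ℝ) < d i + l2)]
        exact div_le_div₀ (norm_nonneg c) (norm_le_pi_norm c i) h2 h1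
      have hTub : N l2 ≤ C * ‖y l2‖ :=
        (T : (Fin n → ℝ) →L[ℝ] EuclideanSpace ℝ (Fin n)).le_opNorm _
      have h3 : σ * N l2 ≤ σ * C * (‖c‖ / (l2 - lb)) := by
        have := mul_le_mul_of_nonneg_left (hTub.trans (mul_le_mul_of_nonneg_left hub hC0)) hσ.le
        calc σ * N l2 ≤ σ * (C * (‖c‖ / (l2 - lb))) := this
          _ = σ * C * (‖c‖ / (l2 - lb)) := by ring
      have h4 : σ * C * (‖c‖ / (l2 - lb)) ≤ σ * C * ‖c‖ := by
        rw [mul_div_assoc']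
        apply div_le_self hK0
        linarith
      linarith
    have hsub : Set.Icc l1 l2 ⊆ Set.Ioi lb := fun x hx => lt_of_lt_of_le hl1 hx.1
    have hfc : ContinuousOn (fun lam => σ * N lam - lam) (Set.Icc l1 l2) :=
      (continuousOn_const.mul (hNcont.mono hsub)).sub continuousOn_id
    obtain ⟨lam, hlam, hlam0⟩ := intermediate_value_Icc' hl12 hfc
      (Set.mem_Icc.2 ⟨by linarith, by linarith⟩ : (0:ℝ) ∈ Set.Icc (σ * N l2 - l2) (σ * N l1 - l1))
    have hlamlb : lb < lam := lt_of_lt_of_le hl1 hlam.1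
    have h0 : σ * N lam - lam = 0 := hlam0
    have hNr : N lam = ‖T (y lam)‖ := rfl
    refine ⟨y lam, lam, heq lam hlamlb, by rw [← hNr]; linarith, fun i => ?_⟩
    have := hden lam hlamlb i
    linarith
  · push_neg at hex
    -- hard case
    have hker : ∀ i, d i + lb = 0 → c i = 0 := by
      intro i hi
      by_contra hc
      set C' : ℝ := ‖(T.symm : EuclideanSpace ℝ (Fin n) →L[ℝ] (Fin n → ℝ))‖ with hC'def
      have hC'0 : 0 ≤ C' := norm_nonneg _
      have hlow : ∀ lam, lb < lam → |c i| / (lam - lb) ≤ C' * N lam := by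
        intro lam h
        have h2 : (0:ℝ) < lam - lb := by linarith
        have hdi : d i + lam = lam - lb := by linarith [hi]
        have h3 : |c i| / (lam - lb) = |y lam i| := by
          rw [hydef]; simp only [abs_div, abs_neg, hdi, abs_of_pos h2]
        have h4 : |y lam i| ≤ ‖y lam‖ := by
          simpa [Real.norm_eq_abs] using norm_le_pi_norm (y lam) i
        have h5 : ‖y lam‖ ≤ C' * ‖T (y lam)‖ := by
          conv_lhs => rw [← T.symm_apply_apply (y lam)]
          exact (T.symm : EuclideanSpace ℝ (Fin n) →L[ℝ] (Fin n → ℝ)).le_opNorm _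
        rw [h3]; exact h4.trans h5
      set r : ℝ := σ * |c i| with hrdef
      have hr : 0 < r := by
        have : 0 < |c i| := abs_pos.2 hc
        positivity
      set q : ℝ := C' * (lb + 1) with hqdef
      have hq0 : 0 ≤ q := by positivity
      set ε : ℝ := min 1 (r / (q + 1)) with hεdef
      have hε0 : 0 < ε := lt_min one_pos (by positivity)
      have hε1 : ε ≤ 1 := min_le_left _ _
      have hε2 : ε ≤ r / (q + 1) := min_le_right _ _
      have h1 := hex (lb + ε) (by linarith)
      have h2 := hlow (lb + ε) (by linarith)
      have h3 : |c i| / ε ≤ C' * N (lb + ε) := by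
        have heps : lb + ε - lb = ε := by ring
        rw [heps] at h2; exact h2
      have h4 : σ * (|c i| / ε) ≤ σ * (C' * N (lb + ε)) :=
        mul_le_mul_of_nonneg_left h3 hσ.le
      have h5 : C' * (σ * N (lb + ε)) ≤ C' * (lb + ε) :=
        mul_le_mul_of_nonneg_left h1.le hC'0
      have h6 : r / ε ≤ C' * (lb + ε) := by
        calc r / ε = σ * (|c i| / ε) := by rw [hrdef]; ring
          _ ≤ σ * (C' * N (lb + ε)) := h4
          _ = C' * (σ * N (lb + ε)) := by ring
          _ ≤ C' * (lb + ε) := h5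
      have h7 : r ≤ C' * (lb + ε) * ε := by
        rw [div_le_iff₀ hε0] at h6; exact h6
      have h8 : C' * (lb + ε) * ε ≤ q * ε := by
        apply mul_le_mul_of_nonneg_right _ hε0.le
        rw [hqdef]
        exact mul_le_mul_of_nonneg_left (by linarith) hC'0
      have h9 : q * ε ≤ q * (r / (q + 1)) := mul_le_mul_of_nonneg_left hε2 hq0
      have h10 : q * (r / (q + 1)) < r := by
        rw [mul_div_assoc', div_lt_iff₀ (by linarith : (0:ℝ) < q + 1)]
        nlinarith
      linarith
    set yb : Fin n → ℝ := fun i => if d i + lb = 0 then 0 else -c i / (d i + lb) with hybdef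
    have heqb : ∀ i, (d i + lb) * yb i = -c i := by
      intro i
      by_cases hi : d i + lb = 0
      · simp [hybdef, hi, hker i hi]
      · rw [hybdef]; simp only [if_neg hi]; field_simp
    have hlim : Tendsto y (nhdsWithin lb (Set.Ioi lb)) (nhds yb) := by
      rw [tendsto_pi_nhds]
      intro i
      by_cases hi : d i + lb = 0
      · have hz : ∀ lam, y lam i = 0 := by
          intro lam; rw [hydef]; simp [hker i hi]
        simp only [hz]
        have hyb : yb i = 0 := by simp [hybdef, hi]
        rw [hyb]
        exact tendsto_const_nhds
      · have hcont : Tendsto (fun lam => -c i / (d i + lam)) (nhds lb)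
            (nhds (-c i / (d i + lb))) :=
          Tendsto.div tendsto_const_nhds ((continuous_const.add continuous_id).tendsto lb) hi
        have hyb : yb i = -c i / (d i + lb) := by simp [hybdef, hi]
        rw [hydef, hyb]
        exact hcont.mono_left nhdsWithin_le_nhds
    have hlimN : Tendsto (fun lam => σ * N lam) (nhdsWithin lb (Set.Ioi lb))
        (nhds (σ * ‖T yb‖)) := by
      have hco : Continuous fun v : Fin n → ℝ => σ * ‖T v‖ :=
        continuous_const.mul (T.continuous.norm)
      exact (hco.tendsto yb).comp hlim
    have hle : σ * ‖T yb‖ ≤ lb := by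
      refine le_of_tendsto_of_tendsto hlimN
        ((continuous_id.tendsto lb).mono_left nhdsWithin_le_nhds) ?_
      filter_upwards [self_mem_nhdsWithin] with lam hlam
      exact (hex lam hlam).le
    rcases eq_or_lt_of_le hle with heql | hlt
    · exact ⟨yb, lb, heqb, heql.symm, hdlb⟩
    · -- strict hard case : add kernel component
      have hlbpos : 0 < lb := lt_of_le_of_lt (by positivity) hlt
      have hlbμ : lb = μ := by
        rcases le_or_gt μ 0 with h | h
        · rw [hlbdef, max_eq_left h] at hlbpos; linarith
        · rw [hlbdef, max_eq_right h.le]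
      obtain ⟨i0, -, hi0⟩ := Finset.exists_mem_eq_sup' (Finset.univ_nonempty (α := Fin n))
        (fun i => -d i)
      have hdi0 : d i0 + lb = 0 := by rw [hlbμ, hμdef, hi0]; ring
      set e : Fin n → ℝ := Pi.single i0 1 with hedef
      have he : e ≠ 0 := by
        intro h
        have := congrFun h i0
        simp [hedef] at this
      have hTe : 0 < ‖T e‖ := by
        rw [norm_pos_iff]
        simp only [ne_eq, ContinuousLinearEquiv.map_eq_zero_iff]
        exact he
      set z : ℝ → Fin n → ℝ := fun τ => yb + τ • e with hzdef
      have heqz : ∀ τ i, (d i + lb) * z τ i = -c i := by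
        intro τ i
        by_cases hii : i = i0
        · subst hii
          rw [hzdef]
          simp [hdi0, hker i hdi0]
        · rw [hzdef]
          simp only [Pi.add_apply, Pi.smul_apply, hedef, Pi.single_eq_of_ne hii, smul_zero,
            add_zero]
          exact heqb i
      have hz0 : z 0 = yb := by rw [hzdef]; simp
      have hcont2 : Continuous fun τ : ℝ => σ * ‖T (z τ)‖ := by
        apply continuous_const.mul
        apply Continuous.norm
        apply T.continuous.comp
        rw [hzdef]; fun_prop
      set τ0 : ℝ := (lb / σ + ‖T yb‖) / ‖T e‖ with hτ0def
      have hτ00 : 0 ≤ τ0 := by positivity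
      have hval : lb ≤ σ * ‖T (z τ0)‖ := by
        have hTz : T (z τ0) = T yb + τ0 • T e := by
          rw [hzdef]; simp only [Pi.add_apply]; rw [map_add, T.map_smul]
        have h1 : τ0 * ‖T e‖ - ‖T yb‖ ≤ ‖T (z τ0)‖ := by
          rw [hTz]
          have hbnd := norm_sub_norm_le (τ0 • T e) (-(T yb))
          rw [norm_neg, sub_neg_eq_add, norm_smul, Real.norm_eq_abs, abs_of_nonneg hτ00] at hbnd
          calc τ0 * ‖T e‖ - ‖T yb‖ ≤ ‖τ0 • T e + T yb‖ := hbnd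
            _ = ‖T yb + τ0 • T e‖ := by rw [add_comm]
        have h2 : τ0 * ‖T e‖ = lb / σ + ‖T yb‖ := div_mul_cancel₀ _ (ne_of_gt hTe)
        have h3 : lb / σ ≤ ‖T (z τ0)‖ := by linarith
        calc lb = σ * (lb / σ) := by field_simp
          _ ≤ σ * ‖T (z τ0)‖ := mul_le_mul_of_nonneg_left h3 hσ.le
      obtain ⟨τs, -, hτs⟩ := intermediate_value_Icc hτ00 hcont2.continuousOn
        (Set.mem_Icc.2 ⟨by rw [hz0]; linarith, hval⟩ :
          lb ∈ Set.Icc (σ * ‖T (z 0)‖) (σ * ‖T (z τ0)‖))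
      exact ⟨z τs, lb, heqz τs, hτs.symm, hdlb⟩

set_option maxHeartbeats 1000000 in
/-- Well-definedness of the regularized preconditioned Newton subproblem:
for symmetric `A`, symmetric positive definite `M`, `g ≠ 0` and `σ > 0`, there
exists a pair `(s⋆, λ⋆)` with `(A + λ⋆ M) s⋆ = −M g`, `λ⋆ = σ ‖s⋆‖` (Euclidean
norm), and `A + λ⋆ M` positive semidefinite. -/
theorem regularized_subproblem_well_defined {n : ℕ}
    (A M : Matrix (Fin n) (Fin n) ℝ) (hA : A.IsSymm) (hM : M.PosDef)
    (g : Fin n → ℝ) (hg : g ≠ 0) (σ : ℝ) (hσ : 0 < σ) :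
    ∃ (s : Fin n → ℝ) (lam : ℝ),
      (A + lam • M).mulVec s = -(M.mulVec g) ∧
      lam = σ * Real.sqrt (∑ i, s i ^ 2) ∧
      (A + lam • M).PosSemidef := by
  classical
  -- square root of M
  obtain ⟨R, hRsd, hRR⟩ : ∃ R : Matrix (Fin n) (Fin n) ℝ, R.PosSemidef ∧ R * R = M := by
    open scoped MatrixOrder in
    exact ⟨CFC.sqrt M, (CFC.sqrt_nonneg M).posSemidef, CFC.sqrt_mul_sqrt_self M hM.posSemidef.nonneg⟩
  have hRH : Rᴴ = R := hRsd.isHermitian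
  have hRdet : IsUnit R.det := by
    rw [← Matrix.isUnit_iff_isUnit_det]
    rw [Matrix.isUnit_iff_isUnit_det]
    have hdd : R.det * R.det = M.det := by rw [← Matrix.det_mul, hRR]
    have hMdet : 0 < M.det := hM.det_pos
    have : R.det ≠ 0 := by
      intro h; rw [h, mul_zero] at hdd; rw [← hdd] at hMdet; exact lt_irrefl _ hMdet
    exact this.isUnit
  haveI : Invertible R := R.invertibleOfIsUnitDet hRdet
  have hRmul : R * R⁻¹ = 1 := Matrix.mul_nonsing_inv R hRdet
  have hRmul' : R⁻¹ * R = 1 := Matrix.nonsing_inv_mul R hRdet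
  -- the transformed matrix and its spectral decomposition
  have hAH : Aᴴ = A := by
    rw [Matrix.conjTranspose_eq_transpose_of_trivial, hA.eq]
  have hAtH : (R⁻¹ * A * R⁻¹).IsHermitian := by
    have h1 : ((R⁻¹)ᴴ * A * R⁻¹).IsHermitian :=
      Matrix.isHermitian_conjTranspose_mul_mul (R⁻¹) hAH
    have h2 : (R⁻¹)ᴴ = R⁻¹ := by rw [Matrix.conjTranspose_nonsing_inv, hRH]
    rwa [h2] at h1
  set d : Fin n → ℝ := hAtH.eigenvalues with hddef
  set U : Matrix (Fin n) (Fin n) ℝ := (hAtH.eigenvectorUnitary : Matrix (Fin n) (Fin n) ℝ) with hUdef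
  have hUU : U * star U = 1 := Matrix.mem_unitaryGroup_iff.mp hAtH.eigenvectorUnitary.2
  have hUU' : star U * U = 1 := Matrix.mem_unitaryGroup_iff'.mp hAtH.eigenvectorUnitary.2
  have hspec : R⁻¹ * A * R⁻¹ = U * Matrix.diagonal d * star U := by
    have := hAtH.spectral_theorem
    rwa [RCLike.ofReal_real_eq_id, Function.id_comp] at this
  have hspec2 : True := trivial
  clear_value d U
  clear hspec2
  -- key congruence identity
  have hkey : ∀ lam : ℝ, A + lam • M =
      R * (U * Matrix.diagonal (fun i => d i + lam) * star U) * R := by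
    intro lam
    have hdiag : Matrix.diagonal (fun i => d i + lam)
        = Matrix.diagonal d + lam • (1 : Matrix (Fin n) (Fin n) ℝ) := by
      ext i j
      by_cases hij : i = j
      · subst hij; simp [Matrix.diagonal_apply_eq, Matrix.one_apply_eq]
      · simp [Matrix.diagonal_apply_ne _ hij, Matrix.one_apply_ne hij]
    rw [hdiag]
    have hmid : U * (Matrix.diagonal d + lam • (1 : Matrix (Fin n) (Fin n) ℝ)) * star U
        = R⁻¹ * A * R⁻¹ + lam • (1 : Matrix (Fin n) (Fin n) ℝ) := by
      rw [Matrix.mul_add, Matrix.add_mul, ← hspec]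
      congr 1
      rw [Matrix.mul_smul, Matrix.mul_one, Matrix.smul_mul, hUU]
    rw [hmid, Matrix.mul_add, Matrix.add_mul]
    congr 1
    · calc A = R * R⁻¹ * A * (R⁻¹ * R) := by
            rw [hRmul, hRmul', Matrix.one_mul, Matrix.mul_one]
        _ = R * (R⁻¹ * A * R⁻¹) * R := by simp only [Matrix.mul_assoc]
    · rw [Matrix.mul_smul, Matrix.mul_one, Matrix.smul_mul, hRR]
  -- the linear equivalence
  set P : Matrix (Fin n) (Fin n) ℝ := R⁻¹ * U with hPdef
  have hPinv : Invertible P := by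
    refine ⟨star U * R, ?_, ?_⟩
    · calc star U * R * (R⁻¹ * U) = star U * (R * R⁻¹) * U := by simp only [Matrix.mul_assoc]
        _ = 1 := by rw [hRmul, Matrix.mul_one, hUU']
    · calc R⁻¹ * U * (star U * R) = R⁻¹ * (U * star U) * R := by simp only [Matrix.mul_assoc]
        _ = 1 := by rw [hUU, Matrix.mul_one, hRmul']
  set T : (Fin n → ℝ) ≃L[ℝ] EuclideanSpace ℝ (Fin n) :=
    ((P.toLinearEquiv' hPinv).trans
      (WithLp.linearEquiv 2 ℝ (Fin n → ℝ)).symm).toContinuousLinearEquiv with hTdef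
  have hTapp : ∀ x : Fin n → ℝ, ‖T x‖ = Real.sqrt (∑ i, (P.mulVec x) i ^ 2) := by
    intro x
    have h1 : (T x : EuclideanSpace ℝ (Fin n))
        = (WithLp.equiv 2 (Fin n → ℝ)).symm (P.mulVec x) := by
      rw [hTdef]
      rw [LinearEquiv.coe_toContinuousLinearEquiv']
      rfl
    rw [h1, EuclideanSpace.norm_eq]
    congr 1
    apply Finset.sum_congr rfl
    intro i _
    rw [Real.norm_eq_abs, sq_abs]; rfl
  -- invoke the core result
  set c : Fin n → ℝ := (star U).mulVec (R.mulVec g) with hcdef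
  obtain ⟨y, lam, hy1, hy2, hy3⟩ := secular_core T d c σ hσ
  refine ⟨P.mulVec y, lam, ?_, ?_, ?_⟩
  · -- the linear equation
    have hDy : (Matrix.diagonal (fun i => d i + lam)).mulVec y = -c := by
      funext i
      rw [Matrix.mulVec_diagonal]
      simpa using hy1 i
    rw [hkey lam, Matrix.mulVec_mulVec]
    have hcollapse : R * (U * Matrix.diagonal (fun i => d i + lam) * star U) * R * P
        = R * U * Matrix.diagonal (fun i => d i + lam) := by
      rw [hPdef]
      calc R * (U * Matrix.diagonal (fun i => d i + lam) * star U) * R * (R⁻¹ * U)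
          = R * U * Matrix.diagonal (fun i => d i + lam) * (star U * (R * R⁻¹) * U) := by
            simp only [Matrix.mul_assoc]
        _ = R * U * Matrix.diagonal (fun i => d i + lam) := by
            rw [hRmul, Matrix.mul_one, hUU', Matrix.mul_one]
    rw [hcollapse, ← Matrix.mulVec_mulVec, hDy, Matrix.mulVec_neg, hcdef]
    rw [Matrix.mulVec_mulVec, Matrix.mulVec_mulVec]
    have : R * U * (star U) * R = M := by
      calc R * U * star U * R = R * (U * star U) * R := by simp only [Matrix.mul_assoc]
        _ = M := by rw [hUU, Matrix.mul_one, hRR]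
    rw [this]
  · rw [hy2, hTapp]
  · rw [hkey lam]
    have h1 : (Matrix.diagonal (fun i => d i + lam)).PosSemidef :=
      Matrix.posSemidef_diagonal_iff.mpr hy3
    have h2 : (U * Matrix.diagonal (fun i => d i + lam) * Uᴴ).PosSemidef :=
      h1.mul_mul_conjTranspose_same U
    rw [← Matrix.star_eq_conjTranspose] at h2
    have h3 := h2.mul_mul_conjTranspose_same R
    rwa [hRH] at h3
end

section
/- Let f : ℝⁿ → ℝ be continuously differentiable and let g : ℝⁿ → ℝⁿ be continuously differentiable with Jacobian H(x) at every x, where H is L_H-Lipschitz continuous with L_H > 0 (‖H(x) − H(y)‖ ≤ L_H ‖x − y‖ in spectral norm). Suppose there is a continuous function ν : ℝⁿ → ℝ with ν(z) ≥ L̃ > 0 for all z and ∇f(z) = ν(z) g(z) for all z ∈ ℝⁿ. Fix x, s ∈ ℝⁿ and σ ≥ L_H such that H(x) s + σ ‖s‖ s = −g(x) and ⟨g(x), s⟩ ≤ 0. Then f(x + s) − f(x) ≤ −(L̃ L_H / 3) ‖s‖³. -/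
private lemma int_aux1 (A B t : ℝ) :
    ∫ u in (0:ℝ)..t, (A + B * u) = A * t + B * (t ^ 2 / 2) := by
  rw [intervalIntegral.integral_add intervalIntegrable_const
    (intervalIntegral.intervalIntegrable_id.const_mul _),
    intervalIntegral.integral_const, intervalIntegral.integral_const_mul, integral_id]
  simp [smul_eq_mul]
  ring

private lemma int_aux2 (K : ℝ) :
    ∫ t in (0:ℝ)..1, K * (t ^ 2 / 2 - t) = K * (-1 / 3) := by
  have h : ∀ t : ℝ, K * (t ^ 2 / 2 - t) = (K / 2) * t ^ 2 - K * t := fun t => by ring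
  simp_rw [h]
  rw [intervalIntegral.integral_sub (((continuous_pow 2).intervalIntegrable 0 1).const_mul _)
    (intervalIntegral.intervalIntegrable_id.const_mul _),
    intervalIntegral.integral_const_mul, intervalIntegral.integral_const_mul,
    integral_id, integral_pow]
  norm_num
  ring

set_option maxHeartbeats 1000000 in
/-- Sufficient decrease of the regularized preconditioned Newton step: if `H` is the
`L_H`-Lipschitz Jacobian of `g`, `∇f = ν · g` with `ν ≥ Ltil > 0` continuous, and the
step `s` satisfies `H(x) s + σ‖s‖ s = −g(x)` with `σ ≥ L_H` and `⟨g(x), s⟩ ≤ 0`,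
then `f(x+s) − f(x) ≤ −(Ltil L_H / 3) ‖s‖³`. -/
theorem regularized_step_sufficient_decrease {n : ℕ}
    (f : EuclideanSpace ℝ (Fin n) → ℝ) (hf : ContDiff ℝ 1 f)
    (g : EuclideanSpace ℝ (Fin n) → EuclideanSpace ℝ (Fin n))
    (H : EuclideanSpace ℝ (Fin n) → EuclideanSpace ℝ (Fin n) →L[ℝ] EuclideanSpace ℝ (Fin n))
    (hgdiff : ∀ x, HasFDerivAt g (H x) x) (hHcont : Continuous H)
    (L_H : ℝ) (hLH : 0 < L_H)
    (hLip : ∀ x y, ‖H x - H y‖ ≤ L_H * ‖x - y‖)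
    (ν : EuclideanSpace ℝ (Fin n) → ℝ) (hν : Continuous ν)
    (Ltil : ℝ) (hLtil : 0 < Ltil) (hνlb : ∀ z, Ltil ≤ ν z)
    (hgrad : ∀ z, gradient f z = ν z • g z)
    (x s : EuclideanSpace ℝ (Fin n)) (σ : ℝ) (hσ : L_H ≤ σ)
    (hstep : H x s + (σ * ‖s‖) • s = -g x)
    (hdescent : (inner ℝ (g x) s : ℝ) ≤ 0) :
    f (x + s) - f x ≤ -(Ltil * L_H / 3) * ‖s‖ ^ 3 := by
  set c := ‖s‖ with hc
  have hc0 : 0 ≤ c := norm_nonneg s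
  set γ : ℝ → EuclideanSpace ℝ (Fin n) := fun t => x + t • s with hγdef
  have hγderiv : ∀ t : ℝ, HasDerivAt γ s t := by
    intro t
    simpa [hγdef] using ((hasDerivAt_id t).smul_const s).const_add x
  have hγcont : Continuous γ := continuous_const.add (continuous_id.smul continuous_const)
  have hγ0 : γ 0 = x := by simp [hγdef]
  have hγ1 : γ 1 = x + s := by simp [hγdef]
  have hγdist : ∀ t : ℝ, 0 ≤ t → ‖γ t - x‖ = t * c := by
    intro t ht
    simp [hγdef, norm_smul, abs_of_nonneg ht, hc]
  set ψ : ℝ → ℝ := fun t => inner ℝ (g (γ t)) s with hψdef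
  have hψderiv : ∀ t : ℝ, HasDerivAt ψ (inner ℝ (H (γ t) s) s) t := by
    intro t
    have h1 : HasDerivAt (fun t => g (γ t)) (H (γ t) s) t :=
      (hgdiff (γ t)).comp_hasDerivAt t (hγderiv t)
    simpa using h1.inner ℝ (hasDerivAt_const t s)
  have hψcont : Continuous ψ :=
    continuous_iff_continuousAt.mpr fun t => (hψderiv t).continuousAt
  have hψ'cont : Continuous fun t => (inner ℝ (H (γ t) s) s : ℝ) :=
    ((hHcont.comp hγcont).clm_apply continuous_const).inner continuous_const
  have hψ0 : ψ 0 = inner ℝ (g x) s := by rw [hψdef]; simp [hγ0]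
  have hA : (inner ℝ (H x s) s : ℝ) = -(ψ 0) - σ * c ^ 3 := by
    have h := congrArg (fun z => (inner ℝ z s : ℝ)) hstep
    simp only [inner_add_left, real_inner_smul_left, inner_neg_left] at h
    rw [real_inner_self_eq_norm_sq] at h
    rw [hψ0]
    nlinarith [h]
  -- key pointwise bound for ψ on [0,1]
  have key : ∀ t ∈ Set.Icc (0:ℝ) 1, ψ t ≤ L_H * c ^ 3 * (t ^ 2 / 2 - t) := by
    intro t ht
    obtain ⟨ht0, ht1⟩ := ht
    have hint : ∫ u in (0:ℝ)..t, (inner ℝ (H (γ u) s) s : ℝ) = ψ t - ψ 0 :=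
      intervalIntegral.integral_eq_sub_of_hasDerivAt (fun u _ => hψderiv u)
        (hψ'cont.intervalIntegrable 0 t)
    have hmono : ∫ u in (0:ℝ)..t, (inner ℝ (H (γ u) s) s : ℝ)
        ≤ ∫ u in (0:ℝ)..t, ((inner ℝ (H x s) s : ℝ) + L_H * c ^ 3 * u) := by
      apply intervalIntegral.integral_mono_on ht0
        (hψ'cont.intervalIntegrable 0 t)
        ((continuous_const.add (continuous_const.mul continuous_id')).intervalIntegrable 0 t)
      intro u hu
      have hu0 : 0 ≤ u := hu.1
      have h1 : (inner ℝ (H (γ u) s) s : ℝ) - (inner ℝ (H x s) s : ℝ)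
          = inner ℝ ((H (γ u) - H x) s) s := by
        simp [ContinuousLinearMap.sub_apply, inner_sub_left]
      have hHb : ‖H (γ u) - H x‖ ≤ L_H * (u * c) := by
        have h := hLip (γ u) x
        rwa [hγdist u hu0] at h
      have h2 : (inner ℝ ((H (γ u) - H x) s) s : ℝ) ≤ L_H * c ^ 3 * u := by
        calc (inner ℝ ((H (γ u) - H x) s) s : ℝ)
            ≤ ‖(H (γ u) - H x) s‖ * ‖s‖ := real_inner_le_norm _ _
          _ ≤ ‖H (γ u) - H x‖ * ‖s‖ * ‖s‖ :=
              mul_le_mul_of_nonneg_right ((H (γ u) - H x).le_opNorm s) (norm_nonneg s)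
          _ ≤ (L_H * (u * c)) * ‖s‖ * ‖s‖ :=
              mul_le_mul_of_nonneg_right
                (mul_le_mul_of_nonneg_right hHb (norm_nonneg s)) (norm_nonneg s)
          _ = L_H * c ^ 3 * u := by rw [← hc]; ring
      simp only [Pi.add_apply, Pi.mul_apply]
      linarith [h1, h2]
    have hcalc := int_aux1 (inner ℝ (H x s) s : ℝ) (L_H * c ^ 3) t
    have hψt : ψ t ≤ ψ 0 + (inner ℝ (H x s) s : ℝ) * t + L_H * c ^ 3 * (t ^ 2 / 2) := by
      rw [hcalc] at hmono
      linarith [hint, hmono]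
    have hψ0le : ψ 0 ≤ 0 := by rw [hψ0]; exact hdescent
    have hc3 : (0:ℝ) ≤ c ^ 3 := by positivity
    nlinarith [hψt, hA, mul_nonneg (sub_nonneg.mpr ht1) (neg_nonneg.mpr hψ0le),
      mul_nonneg (mul_nonneg ht0 (sub_nonneg.mpr hσ)) hc3]
  -- derivative of f along the curve
  have hφderiv : ∀ t : ℝ, HasDerivAt (fun t => f (γ t)) (ν (γ t) * ψ t) t := by
    intro t
    have hgr : HasGradientAt f (ν (γ t) • g (γ t)) (γ t) := by
      rw [← hgrad]
      exact (hf.differentiable one_ne_zero (γ t)).hasGradientAt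
    have h1 : HasDerivAt (fun t => f (γ t))
        ((InnerProductSpace.toDual ℝ (EuclideanSpace ℝ (Fin n)) (ν (γ t) • g (γ t))) s) t :=
      hgr.hasFDerivAt.comp_hasDerivAt t (hγderiv t)
    have h2 : ((InnerProductSpace.toDual ℝ (EuclideanSpace ℝ (Fin n)))
        (ν (γ t) • g (γ t))) s = ν (γ t) * ψ t := by
      rw [InnerProductSpace.toDual_apply_apply, real_inner_smul_left]
    rwa [h2] at h1
  have hφ'cont : Continuous fun t => ν (γ t) * ψ t := (hν.comp hγcont).mul hψcont
  have hFTC : ∫ t in (0:ℝ)..1, ν (γ t) * ψ t = f (x + s) - f x := by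
    rw [← hγ1, ← hγ0]
    exact intervalIntegral.integral_eq_sub_of_hasDerivAt (fun t _ => hφderiv t)
      (hφ'cont.intervalIntegrable 0 1)
  have hmono2 : ∫ t in (0:ℝ)..1, ν (γ t) * ψ t
      ≤ ∫ t in (0:ℝ)..1, (Ltil * L_H * c ^ 3) * (t ^ 2 / 2 - t) := by
    apply intervalIntegral.integral_mono_on zero_le_one
      (hφ'cont.intervalIntegrable 0 1)
      ((continuous_const.mul
        (((continuous_pow 2).div_const 2).sub continuous_id')).intervalIntegrable 0 1)
    intro t ht
    have hψt := key t ht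
    have hq : t ^ 2 / 2 - t ≤ 0 := by nlinarith [ht.1, ht.2]
    have hnonpos : L_H * c ^ 3 * (t ^ 2 / 2 - t) ≤ 0 :=
      mul_nonpos_of_nonneg_of_nonpos (by positivity) hq
    have hψt0 : ψ t ≤ 0 := hψt.trans hnonpos
    calc ν (γ t) * ψ t ≤ Ltil * ψ t := mul_le_mul_of_nonpos_right (hνlb _) hψt0
      _ ≤ Ltil * (L_H * c ^ 3 * (t ^ 2 / 2 - t)) := mul_le_mul_of_nonneg_left hψt hLtil.le
      _ = (Ltil * L_H * c ^ 3) * (t ^ 2 / 2 - t) := by ring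
  have hcalc2 := int_aux2 (Ltil * L_H * c ^ 3)
  rw [hcalc2] at hmono2
  rw [← hFTC]
  calc ∫ t in (0:ℝ)..1, ν (γ t) * ψ t ≤ Ltil * L_H * c ^ 3 * (-1 / 3) := hmono2
    _ = -(Ltil * L_H / 3) * c ^ 3 := by ring
end

section
/- Let g : ℝⁿ → ℝⁿ be continuously differentiable with Jacobian H(x) at every x, where H is L_H-Lipschitz continuous with L_H ≥ 0 (‖H(x) − H(y)‖ ≤ L_H ‖x − y‖ in spectral norm). Fix x, s ∈ ℝⁿ and σ > 0 such that H(x) s + σ ‖s‖ s = −g(x). Then ‖g(x + s)‖ ≤ ((2σ + L_H)/2) ‖s‖², equivalently ‖s‖² ≥ (2 / (2σ + L_H)) ‖g(x + s)‖. -/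
/-- Bound on the next (preconditioned) gradient after a regularized Newton step: if
`H` is the `L_H`-Lipschitz Jacobian of `g` and `H(x) s + σ‖s‖ s = −g(x)` with
`σ > 0`, then `‖g(x+s)‖ ≤ ((2σ + L_H)/2) ‖s‖²`. -/
theorem gradient_bound_after_regularized_step {n : ℕ}
    (g : EuclideanSpace ℝ (Fin n) → EuclideanSpace ℝ (Fin n))
    (H : EuclideanSpace ℝ (Fin n) → EuclideanSpace ℝ (Fin n) →L[ℝ] EuclideanSpace ℝ (Fin n))
    (hgdiff : ∀ x, HasFDerivAt g (H x) x) (hHcont : Continuous H)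
    (L_H : ℝ) (hLH : 0 ≤ L_H)
    (hLip : ∀ x y, ‖H x - H y‖ ≤ L_H * ‖x - y‖)
    (x s : EuclideanSpace ℝ (Fin n)) (σ : ℝ) (hσ : 0 < σ)
    (hstep : H x s + (σ * ‖s‖) • s = -g x) :
    ‖g (x + s)‖ ≤ (2 * σ + L_H) / 2 * ‖s‖ ^ 2 ∧
      2 / (2 * σ + L_H) * ‖g (x + s)‖ ≤ ‖s‖ ^ 2 := by
  set f : ℝ → EuclideanSpace ℝ (Fin n) := fun t => g (x + t • s) - t • (H x s) with hf
  set f' : ℝ → EuclideanSpace ℝ (Fin n) := fun t => H (x + t • s) s - H x s with hf'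
  have hderiv : ∀ t : ℝ, HasDerivAt f (f' t) t := by
    intro t
    have h1 : HasDerivAt (fun t : ℝ => x + t • s) s t := by
      simpa using ((hasDerivAt_id t).smul_const s).const_add x
    have h2 : HasDerivAt (fun t : ℝ => g (x + t • s)) (H (x + t • s) s) t :=
      (hgdiff (x + t • s)).comp_hasDerivAt t h1
    exact h2.sub (by simpa using (hasDerivAt_id t).smul_const (H x s))
  have hcont : Continuous f' := by
    have : Continuous fun t : ℝ => H (x + t • s) :=
      hHcont.comp (continuous_const.add (continuous_id.smul continuous_const))
    exact ((this.clm_apply continuous_const)).sub continuous_const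
  have hFTC : (∫ t in (0:ℝ)..1, f' t) = f 1 - f 0 :=
    intervalIntegral.integral_eq_sub_of_hasDerivAt (fun t _ => hderiv t)
      (hcont.intervalIntegrable 0 1)
  have hbound : ‖∫ t in (0:ℝ)..1, f' t‖ ≤ L_H * ‖s‖ ^ 2 / 2 := by
    have h1 : ∀ t ∈ Set.Ioc (0:ℝ) 1, ‖f' t‖ ≤ (L_H * ‖s‖ ^ 2) * t := by
      intro t ht
      have : f' t = (H (x + t • s) - H x) s := by simp [hf']
      rw [this]
      calc ‖(H (x + t • s) - H x) s‖ ≤ ‖H (x + t • s) - H x‖ * ‖s‖ :=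
            (H (x + t • s) - H x).le_opNorm s
        _ ≤ (L_H * ‖(x + t • s) - x‖) * ‖s‖ := by
            gcongr; exact hLip _ _
        _ = (L_H * ‖s‖ ^ 2) * t := by
            have : (x + t • s) - x = t • s := by abel
            rw [this, norm_smul, Real.norm_eq_abs, abs_of_pos ht.1]
            ring
    have h2 : IntervalIntegrable (fun t => (L_H * ‖s‖ ^ 2) * t) MeasureTheory.volume 0 1 :=
      (continuous_const.mul continuous_id).intervalIntegrable 0 1
    have h3 := intervalIntegral.norm_integral_le_abs_of_norm_le
      (μ := MeasureTheory.volume) (a := 0) (b := 1) (f := f')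
      (MeasureTheory.ae_restrict_of_forall_mem measurableSet_uIoc
        (fun t ht => h1 t (by
          simpa [Set.uIoc_of_le (by norm_num : (0:ℝ) ≤ 1)] using ht))) h2
    have h4 : (∫ t in (0:ℝ)..1, (L_H * ‖s‖ ^ 2) * t) = L_H * ‖s‖ ^ 2 / 2 := by
      rw [intervalIntegral.integral_const_mul, integral_id]
      ring
    rw [h4] at h3
    calc ‖∫ t in (0:ℝ)..1, f' t‖ ≤ |L_H * ‖s‖ ^ 2 / 2| := h3
      _ = L_H * ‖s‖ ^ 2 / 2 := abs_of_nonneg (by positivity)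
  have hkey : ‖g (x + s) - g x - H x s‖ ≤ L_H * ‖s‖ ^ 2 / 2 := by
    have : g (x + s) - g x - H x s = f 1 - f 0 := by
      simp [hf]
      abel
    rw [this, ← hFTC]; exact hbound
  have hsum : g x + H x s = -((σ * ‖s‖) • s) := by
    have hH : H x s = -g x - (σ * ‖s‖) • s := by rw [← hstep]; abel
    rw [hH]; abel
  have hgs : g (x + s) = (g (x + s) - g x - H x s) + (g x + H x s) := by abel
  rw [hsum] at hgs
  have hmain : ‖g (x + s)‖ ≤ (2 * σ + L_H) / 2 * ‖s‖ ^ 2 := by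
    rw [hgs]
    calc ‖(g (x + s) - g x - H x s) + -((σ * ‖s‖) • s)‖
        ≤ ‖g (x + s) - g x - H x s‖ + ‖(σ * ‖s‖) • s‖ := by
          simpa using norm_add_le (g (x + s) - g x - H x s) (-((σ * ‖s‖) • s))
      _ ≤ L_H * ‖s‖ ^ 2 / 2 + σ * ‖s‖ ^ 2 := by
          gcongr
          rw [norm_smul, Real.norm_eq_abs, abs_of_nonneg (by positivity)]
          rw [sq]; ring_nf; rfl
      _ = (2 * σ + L_H) / 2 * ‖s‖ ^ 2 := by ring
  refine ⟨hmain, ?_⟩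
  have hpos : 0 < 2 * σ + L_H := by linarith
  rw [div_mul_eq_mul_div, div_le_iff₀ hpos]
  calc 2 * ‖g (x + s)‖ ≤ 2 * ((2 * σ + L_H) / 2 * ‖s‖ ^ 2) := by linarith
    _ = ‖s‖ ^ 2 * (2 * σ + L_H) := by ring
end

section
/- Let f : ℝⁿ → ℝ be continuously differentiable with inf f > −∞, let g : ℝⁿ → ℝⁿ be continuously differentiable with Jacobian H(x) at every x, where H is L_H-Lipschitz continuous with L_H > 0, and suppose ∇f(z) = ν(z) g(z) for a continuous ν : ℝⁿ → ℝ with ν(z) ≥ L̃ > 0 for all z. Let σ ≥ L_H and let the sequences {x^k}, {s^k} satisfy for every k: H(x^k) s^k + σ ‖s^k‖ s^k = −g(x^k), ⟨g(x^k), s^k⟩ ≤ 0, and x^{k+1} = x^k + s^k. Then for any ε > 0 and K ∈ ℕ, if ‖g(x^k)‖ > ε for all 1 ≤ k ≤ K, then K ≤ 6 σ^{3/2} (f(x⁰) − inf f) / (L̃ L_H ε^{3/2}). In particular the method finds a point with ‖g(x^K)‖ ≤ ε in at most 6 σ^{3/2} (f(x⁰) − inf f) / (L̃ L_H ε^{3/2})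 iterations. -/
open scoped RealInnerProductSpace
open intervalIntegral

set_option maxHeartbeats 1600000
set_option synthInstance.maxHeartbeats 200000

/-- Second-order Taylor bound for a map with Lipschitz Jacobian. -/
private lemma newton_taylor_aux {E : Type*} [NormedAddCommGroup E] [NormedSpace ℝ E]
    [CompleteSpace E]
    (g : E → E) (H : E → E →L[ℝ] E) (hg : ∀ x, HasFDerivAt g (H x) x)
    (hHcont : Continuous H)
    (L : ℝ) (hL : 0 ≤ L) (hLip : ∀ x y, ‖H x - H y‖ ≤ L * ‖x - y‖)
    (x s : E) : ‖g (x + s) - g x - H x s‖ ≤ L / 2 * ‖s‖ ^ 2 := by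
  have hderiv : ∀ t : ℝ, HasDerivAt (fun t : ℝ => g (x + t • s) - t • (H x s))
      (H (x + t • s) s - H x s) t := by
    intro t
    have h1 : HasDerivAt (fun t : ℝ => x + t • s) s t := by
      simpa using ((hasDerivAt_id t).smul_const s).const_add x
    have h2 : HasDerivAt (fun t : ℝ => g (x + t • s)) (H (x + t • s) s) t :=
      (hg _).comp_hasDerivAt t h1
    have h3 : HasDerivAt (fun t : ℝ => t • (H x s)) (H x s) t := by
      simpa using (hasDerivAt_id t).smul_const (H x s)
    exact h2.sub h3
  have hcont : Continuous fun t : ℝ => H (x + t • s) s - H x s := by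
    have : Continuous fun t : ℝ => H (x + t • s) s :=
      (ContinuousLinearMap.apply ℝ E s).continuous.comp
        (hHcont.comp (by continuity))
    exact this.sub continuous_const
  have hint : IntervalIntegrable (fun t : ℝ => H (x + t • s) s - H x s)
      MeasureTheory.volume 0 1 := hcont.intervalIntegrable _ _
  have heq : ∫ t in (0:ℝ)..1, (H (x + t • s) s - H x s) =
      (g (x + (1:ℝ) • s) - (1:ℝ) • (H x s)) - (g (x + (0:ℝ) • s) - (0:ℝ) • (H x s)) :=
    integral_eq_sub_of_hasDerivAt (fun t _ => hderiv t) hint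
  have heq2 : g (x + s) - g x - H x s = ∫ t in (0:ℝ)..1, (H (x + t • s) s - H x s) := by
    rw [heq]; simp; abel
  rw [heq2]
  have hb : ‖∫ t in (0:ℝ)..1, (H (x + t • s) s - H x s)‖ ≤
      |∫ t in (0:ℝ)..1, (L * ‖s‖ ^ 2) * t| := by
    apply intervalIntegral.norm_integral_le_abs_of_norm_le
    · filter_upwards [MeasureTheory.ae_restrict_mem measurableSet_Ioc] with t ht
      rw [Set.uIoc_of_le (by norm_num : (0:ℝ) ≤ 1)] at ht
      have h1 : ‖H (x + t • s) s - H x s‖ ≤ ‖H (x + t • s) - H x‖ * ‖s‖ := by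
        have := (H (x + t • s) - H x).le_opNorm s
        simpa using this
      have h2 : ‖H (x + t • s) - H x‖ ≤ L * ‖t • s‖ := by
        simpa using hLip (x + t • s) x
      have h3 : ‖t • s‖ = t * ‖s‖ := by
        rw [norm_smul, Real.norm_eq_abs, abs_of_nonneg ht.1.le]
      calc ‖H (x + t • s) s - H x s‖ ≤ (L * (t * ‖s‖)) * ‖s‖ := by
            refine h1.trans (mul_le_mul_of_nonneg_right ?_ (norm_nonneg s))
            rwa [h3] at h2
        _ = (L * ‖s‖ ^ 2) * t := by ring
    · exact ((continuous_const.mul continuous_id).intervalIntegrable _ _)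
  refine hb.trans ?_
  rw [intervalIntegral.integral_const_mul, integral_id]
  rw [abs_of_nonneg (by positivity)]
  exact le_of_eq (by ring)

/-- Iteration complexity of the regularized preconditioned Newton method: under
`L_H`-Lipschitz continuity of the Jacobian `H` of `g`, with `∇f = ν · g`,
`ν ≥ L̃ > 0`, `σ ≥ L_H`, and iterates `x^{k+1} = x^k + s^k` where
`H(x^k) s^k + σ‖s^k‖ s^k = −g(x^k)` and `⟨g(x^k), s^k⟩ ≤ 0`: if `‖g(x^k)‖ > ε` for
all `1 ≤ k ≤ K`, then `K ≤ 6 σ^{3/2} (f(x⁰) − inf f) / (L̃ L_H ε^{3/2})`. -/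
theorem regularized_newton_complexity {n : ℕ}
    (f : EuclideanSpace ℝ (Fin n) → ℝ) (hf : ContDiff ℝ 1 f)
    (hbdd : BddBelow (Set.range f))
    (g : EuclideanSpace ℝ (Fin n) → EuclideanSpace ℝ (Fin n))
    (H : EuclideanSpace ℝ (Fin n) → EuclideanSpace ℝ (Fin n) →L[ℝ] EuclideanSpace ℝ (Fin n))
    (hgdiff : ∀ x, HasFDerivAt g (H x) x) (hHcont : Continuous H)
    (L_H : ℝ) (hLH : 0 < L_H)
    (hLip : ∀ x y, ‖H x - H y‖ ≤ L_H * ‖x - y‖)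
    (ν : EuclideanSpace ℝ (Fin n) → ℝ) (hν : Continuous ν)
    (Ltil : ℝ) (hLtil : 0 < Ltil) (hνlb : ∀ z, Ltil ≤ ν z)
    (hgrad : ∀ z, gradient f z = ν z • g z)
    (σ : ℝ) (hσ : L_H ≤ σ)
    (xs ss : ℕ → EuclideanSpace ℝ (Fin n))
    (hstep : ∀ k, H (xs k) (ss k) + (σ * ‖ss k‖) • ss k = -g (xs k))
    (hdescent : ∀ k, (inner ℝ (g (xs k)) (ss k) : ℝ) ≤ 0)
    (hiter : ∀ k, xs (k + 1) = xs k + ss k) :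
    ∀ ε : ℝ, 0 < ε → ∀ K : ℕ, (∀ k : ℕ, 1 ≤ k → k ≤ K → ε < ‖g (xs k)‖) →
      (K : ℝ) ≤ 6 * σ ^ ((3 : ℝ) / 2) * (f (xs 0) - ⨅ x, f x) /
        (Ltil * L_H * ε ^ ((3 : ℝ) / 2)) := by
  intro ε hε K hK
  have hσ0 : 0 < σ := hLH.trans_le hσ
  have hgcont : Continuous g :=
    continuous_iff_continuousAt.2 fun z => (hgdiff z).continuousAt
  -- Taylor bound
  have htay : ∀ x s : EuclideanSpace ℝ (Fin n), ‖g (x + s) - g x - H x s‖ ≤ L_H / 2 * ‖s‖ ^ 2 :=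
    newton_taylor_aux g H hgdiff hHcont L_H hLH.le hLip
  -- derivative of f
  have hfd : ∀ z : EuclideanSpace ℝ (Fin n), HasGradientAt f (ν z • g z) z := by
    intro z
    have := (hf.differentiable one_ne_zero z).hasGradientAt
    rwa [hgrad z] at this
  -- per-step norm bound
  have hnorm : ∀ k, ‖g (xs (k + 1))‖ ≤ 3 / 2 * σ * ‖ss k‖ ^ 2 := by
    intro k
    set x := xs k; set s := ss k
    have hx1 : xs (k + 1) = x + s := hiter k
    have hHs : H x s = -g x - (σ * ‖s‖) • s := by
      have := hstep k; rw [eq_sub_iff_add_eq]; simpa using this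
    have : g (x + s) = (g (x + s) - g x - H x s) - ((σ * ‖s‖) • s) := by
      rw [hHs]; abel
    rw [hx1, this]
    calc ‖(g (x + s) - g x - H x s) - ((σ * ‖s‖) • s)‖
        ≤ ‖g (x + s) - g x - H x s‖ + ‖(σ * ‖s‖) • s‖ := norm_sub_le _ _
      _ ≤ L_H / 2 * ‖s‖ ^ 2 + σ * ‖s‖ * ‖s‖ := by
          refine add_le_add (htay x s) ?_
          rw [norm_smul, Real.norm_eq_abs, abs_of_nonneg (by positivity)]
      _ ≤ 3 / 2 * σ * ‖s‖ ^ 2 := by nlinarith [norm_nonneg s, sq_nonneg ‖s‖]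
  -- per-step decrease
  have hdec : ∀ k, Ltil * σ / 3 * ‖ss k‖ ^ 3 ≤ f (xs k) - f (xs (k + 1)) := by
    intro k
    set x := xs k with hxdef; set s := ss k with hsdef
    have hx1 : xs (k + 1) = x + s := hiter k
    have hHs : H x s = -g x - (σ * ‖s‖) • s := by
      have := hstep k; rw [eq_sub_iff_add_eq]; simpa using this
    -- derivative along segment
    have hD : ∀ t : ℝ, HasDerivAt (fun t : ℝ => f (x + t • s))
        (ν (x + t • s) * ⟪g (x + t • s), s⟫) t := by
      intro t
      have h1 : HasDerivAt (fun t : ℝ => x + t • s) s t := by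
        simpa using ((hasDerivAt_id t).smul_const s).const_add x
      have h2 := ((hfd (x + t • s)).hasFDerivAt).comp_hasDerivAt t h1
      have h3 : (InnerProductSpace.toDual ℝ (EuclideanSpace ℝ (Fin n))) (ν (x + t • s) • g (x + t • s)) s =
          ν (x + t • s) * ⟪g (x + t • s), s⟫ := by
        rw [InnerProductSpace.toDual_apply_apply, real_inner_smul_left]
      rwa [h3] at h2
    have hcontD : Continuous fun t : ℝ => ν (x + t • s) * ⟪g (x + t • s), s⟫ := by
      have hc : Continuous fun t : ℝ => x + t • s :=
        continuous_const.add (continuous_id.smul continuous_const)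
      exact (hν.comp hc).mul ((continuous_inner.comp
        (((hgcont.comp hc)).prodMk continuous_const)))
    have heq : ∫ t in (0:ℝ)..1, ν (x + t • s) * ⟪g (x + t • s), s⟫ =
        f (x + (1:ℝ) • s) - f (x + (0:ℝ) • s) :=
      integral_eq_sub_of_hasDerivAt (fun t _ => hD t)
        (hcontD.intervalIntegrable _ _)
    -- pointwise bound on the integrand
    have hbd : ∀ t ∈ Set.Icc (0:ℝ) 1, ν (x + t • s) * ⟪g (x + t • s), s⟫ ≤
        Ltil * (σ * ‖s‖ ^ 3) * (t ^ 2 / 2 - t) := by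
      intro t ht
      obtain ⟨ht0, ht1⟩ := ht
      have hr := htay x (t • s)
      have hts : ‖t • s‖ ^ 2 = t ^ 2 * ‖s‖ ^ 2 := by
        rw [norm_smul, Real.norm_eq_abs, mul_pow, sq_abs]
      have hinner : ⟪g (x + t • s), s⟫ =
          ⟪g (x + t • s) - g x - H x (t • s), s⟫ + ⟪g x, s⟫ + t * ⟪H x s, s⟫ := by
        rw [← real_inner_smul_left, ← (H x).map_smul]
        rw [← inner_add_left, ← inner_add_left]
        congr 1
        abel
      have hHss : ⟪H x s, s⟫ = -⟪g x, s⟫ - σ * ‖s‖ ^ 3 := by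
        rw [hHs, sub_eq_add_neg, inner_add_left, inner_neg_left,
          inner_neg_left, real_inner_smul_left, real_inner_self_eq_norm_sq]
        ring
      have hres : ⟪g (x + t • s) - g x - H x (t • s), s⟫ ≤ L_H / 2 * t ^ 2 * ‖s‖ ^ 3 := by
        calc ⟪g (x + t • s) - g x - H x (t • s), s⟫
            ≤ ‖g (x + t • s) - g x - H x (t • s)‖ * ‖s‖ := real_inner_le_norm _ _
          _ ≤ (L_H / 2 * (t ^ 2 * ‖s‖ ^ 2)) * ‖s‖ := by
              refine mul_le_mul_of_nonneg_right ?_ (norm_nonneg s)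
              rw [← hts]; exact hr
          _ = L_H / 2 * t ^ 2 * ‖s‖ ^ 3 := by ring
      have hgs0 : ⟪g x, s⟫ ≤ 0 := hdescent k
      have hgskey : ⟪g (x + t • s), s⟫ ≤ σ * ‖s‖ ^ 3 * (t ^ 2 / 2 - t) := by
        rw [hinner, hHss]
        have h3 : (0:ℝ) ≤ ‖s‖ ^ 3 := by positivity
        nlinarith [hres, mul_nonpos_of_nonneg_of_nonpos (sub_nonneg.2 ht1) hgs0,
          mul_nonneg (mul_nonneg (sub_nonneg.2 hσ) (sq_nonneg t)) h3]
      have hgsneg : ⟪g (x + t • s), s⟫ ≤ 0 := by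
        refine hgskey.trans ?_
        have : t ^ 2 / 2 - t ≤ 0 := by nlinarith
        have h3 : (0:ℝ) ≤ σ * ‖s‖ ^ 3 := by positivity
        exact mul_nonpos_of_nonneg_of_nonpos h3 this
      calc ν (x + t • s) * ⟪g (x + t • s), s⟫
          ≤ Ltil * ⟪g (x + t • s), s⟫ :=
            mul_le_mul_of_nonpos_right (hνlb _) hgsneg
        _ ≤ Ltil * (σ * ‖s‖ ^ 3 * (t ^ 2 / 2 - t)) :=
            mul_le_mul_of_nonneg_left hgskey hLtil.le
        _ = Ltil * (σ * ‖s‖ ^ 3) * (t ^ 2 / 2 - t) := by ring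
    have hmono : ∫ t in (0:ℝ)..1, ν (x + t • s) * ⟪g (x + t • s), s⟫ ≤
        ∫ t in (0:ℝ)..1, Ltil * (σ * ‖s‖ ^ 3) * (t ^ 2 / 2 - t) := by
      apply intervalIntegral.integral_mono_on (by norm_num)
        (hcontD.intervalIntegrable _ _)
        ((continuous_const.mul (((continuous_pow 2).div_const 2).sub
          continuous_id)).intervalIntegrable _ _) hbd
    have hval : ∫ t in (0:ℝ)..1, Ltil * (σ * ‖s‖ ^ 3) * (t ^ 2 / 2 - t) =
        -(Ltil * σ / 3 * ‖s‖ ^ 3) := by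
      rw [intervalIntegral.integral_const_mul]
      have h1 : ∫ t in (0:ℝ)..1, (t ^ 2 / 2 - t) = -(1/3 : ℝ) := by
        rw [intervalIntegral.integral_sub
          (((continuous_pow 2).div_const 2).intervalIntegrable _ _)
          intervalIntegrable_id, intervalIntegral.integral_div, integral_pow, integral_id]
        norm_num
      rw [h1]; ring
    rw [hval] at hmono
    have : f (x + (1:ℝ) • s) - f (x + (0:ℝ) • s) ≤ -(Ltil * σ / 3 * ‖s‖ ^ 3) := by
      rw [← heq]; exact hmono
    simp only [one_smul, zero_smul, add_zero] at this
    rw [hx1]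
    linarith
  -- per-step decrease is at least c when the gradient is large
  set A := ε ^ ((3:ℝ)/2) with hAdef
  set B := σ ^ ((3:ℝ)/2) with hBdef
  have hA : 0 < A := Real.rpow_pos_of_pos hε _
  have hB : 0 < B := Real.rpow_pos_of_pos hσ0 _
  set c := Ltil * L_H * A / (6 * B) with hcdef
  have hc : 0 < c := by positivity
  have hstep_dec : ∀ k < K, c ≤ f (xs k) - f (xs (k + 1)) := by
    intro k hk
    have hgn : ε < ‖g (xs (k + 1))‖ := hK (k + 1) (by omega) (by omega)
    have hs2 : 2 * ε / (3 * σ) ≤ ‖ss k‖ ^ 2 := by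
      have := (hgn.le.trans (hnorm k))
      rw [div_le_iff₀ (by positivity)]
      nlinarith
    have hs2pos : 0 < 2 * ε / (3 * σ) := by positivity
    have hs3 : (2 * ε / (3 * σ)) ^ ((3:ℝ)/2) ≤ ‖ss k‖ ^ 3 := by
      have h1 : (‖ss k‖ ^ 2 : ℝ) ^ ((3:ℝ)/2) = ‖ss k‖ ^ (3:ℕ) := by
        rw [← Real.rpow_natCast ‖ss k‖ 2, ← Real.rpow_mul (norm_nonneg _),
          ← Real.rpow_natCast ‖ss k‖ 3]
        norm_num
      rw [← h1]
      exact Real.rpow_le_rpow hs2pos.le hs2 (by norm_num)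
    have hrw : (2 * ε / (3 * σ)) ^ ((3:ℝ)/2) =
        2 ^ ((3:ℝ)/2) * A / (3 ^ ((3:ℝ)/2) * B) := by
      rw [Real.div_rpow (by positivity) (by positivity),
        Real.mul_rpow (by norm_num) hε.le, Real.mul_rpow (by norm_num) hσ0.le]
    -- constants: 3 * 3^{3/2} ≤ 6 * 2^{3/2}
    have hp : ((2:ℝ) ^ ((3:ℝ)/2)) ^ 2 = 8 := by
      rw [← Real.rpow_natCast ((2:ℝ) ^ ((3:ℝ)/2)) 2, ← Real.rpow_mul (by norm_num)]
      norm_num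
    have hq : ((3:ℝ) ^ ((3:ℝ)/2)) ^ 2 = 27 := by
      rw [← Real.rpow_natCast ((3:ℝ) ^ ((3:ℝ)/2)) 2, ← Real.rpow_mul (by norm_num)]
      norm_num
    have hppos : (0:ℝ) < 2 ^ ((3:ℝ)/2) := Real.rpow_pos_of_pos (by norm_num) _
    have hqpos : (0:ℝ) < 3 ^ ((3:ℝ)/2) := Real.rpow_pos_of_pos (by norm_num) _
    have hconst : (3:ℝ) * 3 ^ ((3:ℝ)/2) ≤ 6 * 2 ^ ((3:ℝ)/2) := by
      nlinarith [mul_pos hppos hqpos]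
    have hcle : c ≤ Ltil * σ / 3 * ((2 * ε / (3 * σ)) ^ ((3:ℝ)/2)) := by
      rw [hrw, hcdef]
      have h2 : Ltil * σ / 3 * (2 ^ ((3:ℝ)/2) * A / (3 ^ ((3:ℝ)/2) * B)) =
          Ltil * σ * (2 ^ ((3:ℝ)/2)) * A / (3 * (3 ^ ((3:ℝ)/2)) * B) := by
        field_simp
      rw [h2, div_le_div_iff₀ (by positivity) (by positivity)]
      have m1 : L_H * (3 * 3 ^ ((3:ℝ)/2)) ≤ σ * (6 * 2 ^ ((3:ℝ)/2)) :=
        mul_le_mul hσ hconst (by positivity) hσ0.le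
      calc Ltil * L_H * A * (3 * 3 ^ ((3:ℝ)/2) * B)
          = (Ltil * A * B) * (L_H * (3 * 3 ^ ((3:ℝ)/2))) := by ring
        _ ≤ (Ltil * A * B) * (σ * (6 * 2 ^ ((3:ℝ)/2))) :=
            mul_le_mul_of_nonneg_left m1 (by positivity)
        _ = Ltil * σ * 2 ^ ((3:ℝ)/2) * A * (6 * B) := by ring
    refine hcle.trans ?_
    refine le_trans ?_ (hdec k)
    exact mul_le_mul_of_nonneg_left hs3 (by positivity)
  -- telescoping
  have htel : (K : ℝ) * c ≤ f (xs 0) - f (xs K) := by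
    have := Finset.sum_range_sub' (fun k => f (xs k)) K
    calc (K : ℝ) * c = ∑ _k ∈ Finset.range K, c := by
          rw [Finset.sum_const, Finset.card_range, nsmul_eq_mul]
      _ ≤ ∑ k ∈ Finset.range K, (f (xs k) - f (xs (k + 1))) := by
          apply Finset.sum_le_sum
          intro k hk
          exact hstep_dec k (Finset.mem_range.1 hk)
      _ = f (xs 0) - f (xs K) := this
  have hinf : (⨅ x, f x) ≤ f (xs K) := ciInf_le hbdd _
  have hKc : (K : ℝ) * c ≤ f (xs 0) - ⨅ x, f x := by linarith
  have hKle : (K : ℝ) ≤ (f (xs 0) - ⨅ x, f x) / c := by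
    rw [le_div_iff₀ hc]; exact hKc
  refine hKle.trans_eq ?_
  rw [hcdef]
  field_simp
end

section
/- Let f : ℝⁿ → ℝ be continuously differentiable and let g : ℝⁿ → ℝⁿ be continuously differentiable with Jacobian H(x) at every x, where H is L_H-Lipschitz continuous with L_H ≥ 0. Suppose ∇f(z) = ν(z) g(z) for a continuous ν : ℝⁿ → ℝ with ν(z) ≥ L̃ > 0 for all z. Fix x, s, z ∈ ℝⁿ, θ ≥ 0, and σ ≥ L_H + θ such that H(x) s + σ ‖s‖ s = −g(x) + z, ‖z‖ ≤ (θ/2) ‖s‖², and ⟨g(x), s⟩ ≤ 0. Then f(x + s) − f(x) ≤ −(L̃ σ / 4) ‖s‖³. -/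
open Real Set intervalIntegral
set_option maxHeartbeats 800000


/-- Sufficient decrease of the inexact adaptively regularized preconditioned Newton
step: if `H` is the `L_H`-Lipschitz Jacobian of `g`, `∇f = ν · g` with `ν ≥ L̃ > 0`
continuous, and `s` satisfies `H(x) s + σ‖s‖ s = −g(x) + z` with `σ ≥ L_H + θ`,
`‖z‖ ≤ (θ/2)‖s‖²`, and `⟨g(x), s⟩ ≤ 0`, then `f(x+s) − f(x) ≤ −(L̃ σ / 4) ‖s‖³`. -/
theorem inexact_regularized_step_sufficient_decrease {n : ℕ}
    (f : EuclideanSpace ℝ (Fin n) → ℝ) (hf : ContDiff ℝ 1 f)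
    (g : EuclideanSpace ℝ (Fin n) → EuclideanSpace ℝ (Fin n))
    (H : EuclideanSpace ℝ (Fin n) → EuclideanSpace ℝ (Fin n) →L[ℝ] EuclideanSpace ℝ (Fin n))
    (hgdiff : ∀ x, HasFDerivAt g (H x) x) (hHcont : Continuous H)
    (L_H : ℝ) (hLH : 0 ≤ L_H)
    (hLip : ∀ x y, ‖H x - H y‖ ≤ L_H * ‖x - y‖)
    (ν : EuclideanSpace ℝ (Fin n) → ℝ) (hν : Continuous ν)
    (Ltil : ℝ) (hLtil : 0 < Ltil) (hνlb : ∀ z, Ltil ≤ ν z)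
    (hgrad : ∀ z, gradient f z = ν z • g z)
    (x s z : EuclideanSpace ℝ (Fin n)) (θ σ : ℝ) (hθ : 0 ≤ θ)
    (hσ : L_H + θ ≤ σ)
    (hstep : H x s + (σ * ‖s‖) • s = -g x + z)
    (hz : ‖z‖ ≤ θ / 2 * ‖s‖ ^ 2)
    (hdescent : (inner ℝ (g x) s : ℝ) ≤ 0) :
    f (x + s) - f x ≤ -(Ltil * σ / 4) * ‖s‖ ^ 3 := by
  have hσ0 : 0 ≤ σ := le_trans (by linarith) hσ
  set c := ‖s‖ with hc
  have hc0 : 0 ≤ c := norm_nonneg s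
  -- the curve
  have hγ : ∀ t : ℝ, HasDerivAt (fun t : ℝ => x + t • s) s t := by
    intro t
    simpa using ((hasDerivAt_id t).smul_const s).const_add x
  have hγcont : Continuous (fun t : ℝ => x + t • s) :=
    continuous_const.add (continuous_id.smul continuous_const)
  have hgcont : Continuous g := by
    have : Differentiable ℝ g := fun y => (hgdiff y).differentiableAt
    exact this.continuous
  -- derivative of G t = ⟪g (x + t•s), s⟫
  have hG : ∀ t : ℝ, HasDerivAt (fun t : ℝ => (inner ℝ (g (x + t • s)) s : ℝ))
      ((inner ℝ (H (x + t • s) s) s : ℝ)) t := by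
    intro t
    have h1 : HasDerivAt (fun t : ℝ => g (x + t • s)) (H (x + t • s) s) t :=
      (hgdiff (x + t • s)).comp_hasDerivAt t (hγ t)
    simpa using HasDerivAt.inner ℝ h1 (hasDerivAt_const t s)
  -- key bound for G
  have key : ∀ t ∈ Icc (0:ℝ) 1,
      (inner ℝ (g (x + t • s)) s : ℝ) ≤ -(σ/2) * t * c ^ 3 := by
    intro t ht
    -- ψ is antitone
    set ψ : ℝ → ℝ := fun t =>
      (inner ℝ (g (x + t • s)) s : ℝ) - t * (inner ℝ (H x s) s : ℝ) - L_H / 2 * t ^ 2 * c ^ 3 with hψ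
    have hψd : ∀ u : ℝ, HasDerivAt ψ
        ((inner ℝ (H (x + u • s) s) s : ℝ) - (inner ℝ (H x s) s : ℝ) - L_H * u * c ^ 3) u := by
      intro u
      have h2 : HasDerivAt (fun u : ℝ => u * (inner ℝ (H x s) s : ℝ))
          ((inner ℝ (H x s) s : ℝ)) u := by
        simpa using (hasDerivAt_id u).mul_const (inner ℝ (H x s) s : ℝ)
      have h3 : HasDerivAt (fun u : ℝ => L_H / 2 * u ^ 2 * c ^ 3)
          (L_H * u * c ^ 3) u := by
        have := ((hasDerivAt_pow 2 u).const_mul (L_H / 2)).mul_const (c ^ 3)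
        exact this.congr_deriv (by push_cast; ring)
      exact ((hG u).sub h2).sub h3
    have hψanti : AntitoneOn ψ (Icc 0 1) := by
      apply antitoneOn_of_deriv_nonpos (convex_Icc 0 1)
      · exact fun u _ => (hψd u).continuousAt.continuousWithinAt
      · intro u hu
        exact (hψd u).differentiableAt.differentiableWithinAt
      · intro u hu
        rw [interior_Icc] at hu
        rw [(hψd u).deriv]
        have hb : (inner ℝ (H (x + u • s) s) s : ℝ) - (inner ℝ (H x s) s : ℝ)
            = (inner ℝ ((H (x + u • s) - H x) s) s : ℝ) := by
          simp [inner_sub_left]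
        rw [hb]
        have h4 : (inner ℝ ((H (x + u • s) - H x) s) s : ℝ) ≤ L_H * u * c ^ 3 := by
          calc (inner ℝ ((H (x + u • s) - H x) s) s : ℝ)
              ≤ ‖(H (x + u • s) - H x) s‖ * ‖s‖ := real_inner_le_norm _ _
            _ ≤ ‖H (x + u • s) - H x‖ * ‖s‖ * ‖s‖ := by
                gcongr
                exact ContinuousLinearMap.le_opNorm _ _
            _ ≤ L_H * ‖(x + u • s) - x‖ * ‖s‖ * ‖s‖ := by
                gcongr; exact hLip _ _
            _ = L_H * (|u| * c) * c * c := by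
                rw [add_sub_cancel_left, norm_smul]; simp [hc]
            _ = L_H * |u| * c ^ 3 := by ring
            _ = L_H * u * c ^ 3 := by rw [abs_of_pos hu.1]
        linarith
    have hψle : ψ t ≤ ψ 0 := hψanti (by constructor <;> norm_num) ht ht.1
    have hψ0 : ψ 0 = (inner ℝ (g x) s : ℝ) := by simp [hψ]
    -- from the step equation
    have hHxs : (inner ℝ (H x s) s : ℝ)
        = -(inner ℝ (g x) s : ℝ) + (inner ℝ z s : ℝ) - σ * c ^ 3 := by
      have := congrArg (fun v => (inner ℝ v s : ℝ)) hstep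
      simp only [inner_add_left, inner_neg_left, inner_smul_left, RCLike.conj_to_real,
        real_inner_self_eq_norm_sq] at this
      rw [← hc] at this
      nlinarith [this]
    have hzs : (inner ℝ z s : ℝ) ≤ θ / 2 * c ^ 3 := by
      calc (inner ℝ z s : ℝ) ≤ ‖z‖ * ‖s‖ := real_inner_le_norm _ _
        _ ≤ θ / 2 * c ^ 2 * c := by gcongr
        _ = θ / 2 * c ^ 3 := by ring
    have ht2 : t ^ 2 ≤ t := by nlinarith [ht.1, ht.2]
    have hc3 : 0 ≤ c ^ 3 := by positivity
    have := hψle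
    rw [hψ0] at this
    simp only [hψ] at this
    -- G t ≤ G 0 + t * ⟪Hxs,s⟫ + L_H/2 t² c³
    rw [hHxs] at this
    have h5 : t * (inner ℝ z s : ℝ) ≤ t * (θ / 2 * c ^ 3) :=
      mul_le_mul_of_nonneg_left hzs ht.1
    have h6 : L_H / 2 * t ^ 2 * c ^ 3 ≤ L_H / 2 * t * c ^ 3 := by
      have := mul_nonneg (mul_nonneg (show (0:ℝ) ≤ L_H / 2 by linarith) hc3)
        (sub_nonneg.2 ht2)
      nlinarith
    have h7 : 0 ≤ (1 - t) * (-(inner ℝ (g x) s : ℝ)) :=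
      mul_nonneg (by linarith [ht.2]) (by linarith)
    have h8 : 0 ≤ t * c ^ 3 * (σ - θ - L_H) :=
      mul_nonneg (mul_nonneg ht.1 hc3) (by linarith)
    linarith [h5, h6, h7, h8, this]
  -- derivative of F t = f (x + t • s)
  have hfd : Differentiable ℝ f := hf.differentiable one_ne_zero
  have hF : ∀ t : ℝ, HasDerivAt (fun t : ℝ => f (x + t • s))
      (ν (x + t • s) * (inner ℝ (g (x + t • s)) s : ℝ)) t := by
    intro t
    have h1 : HasGradientAt f (gradient f (x + t • s)) (x + t • s) :=
      (hfd _).hasGradientAt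
    have h2 := h1.hasFDerivAt.comp_hasDerivAt t (hγ t)
    refine HasDerivAt.congr_deriv h2 ?_
    rw [InnerProductSpace.toDual_apply_apply, hgrad, inner_smul_left]
    simp
  -- continuity of the derivative
  have hFcont : Continuous (fun t : ℝ => ν (x + t • s) * (inner ℝ (g (x + t • s)) s : ℝ)) := by
    apply Continuous.mul (hν.comp hγcont)
    exact (continuous_inner.comp ((hgcont.comp hγcont).prodMk continuous_const))
  -- FTC
  have hFTC : f (x + s) - f x
      = ∫ t in (0:ℝ)..1, ν (x + t • s) * (inner ℝ (g (x + t • s)) s : ℝ) := by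
    have := intervalIntegral.integral_eq_sub_of_hasDerivAt
      (fun t _ => hF t) (hFcont.intervalIntegrable 0 1)
    rw [this]; simp
  rw [hFTC]
  have hmono : (∫ t in (0:ℝ)..1, ν (x + t • s) * (inner ℝ (g (x + t • s)) s : ℝ))
      ≤ ∫ t in (0:ℝ)..1, -(Ltil * σ / 2) * c ^ 3 * t := by
    apply intervalIntegral.integral_mono_on (by norm_num)
      (hFcont.intervalIntegrable 0 1)
      ((continuous_const.mul continuous_id).intervalIntegrable 0 1)
    intro t ht
    have hGle := key t ht
    have hGneg : (inner ℝ (g (x + t • s)) s : ℝ) ≤ 0 := by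
      nlinarith [hGle, mul_nonneg (mul_nonneg hσ0 ht.1) (pow_nonneg hc0 3)]
    calc ν (x + t • s) * (inner ℝ (g (x + t • s)) s : ℝ)
        ≤ Ltil * (inner ℝ (g (x + t • s)) s : ℝ) :=
          mul_le_mul_of_nonpos_right (hνlb _) hGneg
      _ ≤ Ltil * (-(σ/2) * t * c ^ 3) := by
          exact mul_le_mul_of_nonneg_left hGle hLtil.le
      _ = -(Ltil * σ / 2) * c ^ 3 * t := by ring
  refine le_trans hmono ?_
  rw [intervalIntegral.integral_const_mul, integral_id]
  norm_num
  ring_nf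
  try exact le_refl _
end

section
/- Let g : ℝⁿ → ℝⁿ be continuously differentiable with Jacobian H(x) at every x, where H is L_H-Lipschitz continuous with L_H ≥ 0. Fix x, s, z ∈ ℝⁿ, θ ≥ 0, and 0 < σ ≤ σ_max such that H(x) s + σ ‖s‖ s = −g(x) + z and ‖z‖ ≤ (θ/2) ‖s‖². Then ‖g(x + s)‖ ≤ ((2 σ_max + L_H + θ)/2) ‖s‖², equivalently ‖s‖² ≥ (2 / (2 σ_max + L_H + θ)) ‖g(x + s)‖. -/
/-- Bound on the next (preconditioned) gradient after an inexact regularized Newton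
step: if `H` is the `L_H`-Lipschitz Jacobian of `g`, `H(x) s + σ‖s‖ s = −g(x) + z`
with `0 < σ ≤ σ_max` and `‖z‖ ≤ (θ/2)‖s‖²`, then
`‖g(x+s)‖ ≤ ((2σ_max + L_H + θ)/2) ‖s‖²`. -/
theorem gradient_bound_after_inexact_regularized_step {n : ℕ}
    (g : EuclideanSpace ℝ (Fin n) → EuclideanSpace ℝ (Fin n))
    (H : EuclideanSpace ℝ (Fin n) → EuclideanSpace ℝ (Fin n) →L[ℝ] EuclideanSpace ℝ (Fin n))
    (hgdiff : ∀ x, HasFDerivAt g (H x) x) (hHcont : Continuous H)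
    (L_H : ℝ) (hLH : 0 ≤ L_H)
    (hLip : ∀ x y, ‖H x - H y‖ ≤ L_H * ‖x - y‖)
    (x s z : EuclideanSpace ℝ (Fin n)) (θ σ σmax : ℝ) (hθ : 0 ≤ θ)
    (hσ : 0 < σ) (hσmax : σ ≤ σmax)
    (hstep : H x s + (σ * ‖s‖) • s = -g x + z)
    (hz : ‖z‖ ≤ θ / 2 * ‖s‖ ^ 2) :
    ‖g (x + s)‖ ≤ (2 * σmax + L_H + θ) / 2 * ‖s‖ ^ 2 ∧
      2 / (2 * σmax + L_H + θ) * ‖g (x + s)‖ ≤ ‖s‖ ^ 2 := by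
  have hline : Continuous fun t : ℝ => x + t • s :=
    continuous_const.add (continuous_id.smul continuous_const)
  have hcontI : Continuous fun t : ℝ => H (x + t • s) s :=
    (hHcont.comp hline).clm_apply continuous_const
  have hint : IntervalIntegrable (fun t : ℝ => H (x + t • s) s)
      MeasureTheory.volume 0 1 := hcontI.intervalIntegrable _ _
  have hd : ∀ t : ℝ, HasDerivAt (fun t : ℝ => g (x + t • s)) (H (x + t • s) s) t := by
    intro t
    have h1 : HasDerivAt (fun t : ℝ => x + t • s) s t := by
      simpa using ((hasDerivAt_id t).smul_const s).const_add x
    exact (hgdiff (x + t • s)).comp_hasDerivAt t h1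
  have key : ∫ t in (0:ℝ)..1, H (x + t • s) s = g (x + s) - g x := by
    have := intervalIntegral.integral_eq_sub_of_hasDerivAt (f := fun t : ℝ => g (x + t • s))
      (fun t _ => hd t) hint
    simpa using this
  have hconst : ∫ t in (0:ℝ)..1, (H x) s = (H x) s := by simp
  have hrem : ‖g (x + s) - g x - H x s‖ ≤ L_H / 2 * ‖s‖ ^ 2 := by
    have hsub : g (x + s) - g x - H x s
        = ∫ t in (0:ℝ)..1, (H (x + t • s) s - H x s) := by
      rw [intervalIntegral.integral_sub hint
        (intervalIntegrable_const), key, hconst]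
    rw [hsub]
    have hbd : ∀ t ∈ Set.uIcc (0:ℝ) 1, ‖H (x + t • s) s - H x s‖ ≤ L_H * t * ‖s‖ ^ 2 := by
      intro t ht
      rw [Set.uIcc_of_le zero_le_one] at ht
      have h1 : ‖H (x + t • s) s - H x s‖ ≤ ‖H (x + t • s) - H x‖ * ‖s‖ := by
        have h := (H (x + t • s) - H x).le_opNorm s
        rwa [ContinuousLinearMap.sub_apply] at h
      have h2 : ‖H (x + t • s) - H x‖ ≤ L_H * (t * ‖s‖) := by
        have h := hLip (x + t • s) x
        have he : x + t • s - x = t • s := by abel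
        rwa [he, norm_smul, Real.norm_eq_abs, abs_of_nonneg ht.1] at h
      calc ‖H (x + t • s) s - H x s‖ ≤ L_H * (t * ‖s‖) * ‖s‖ :=
            h1.trans (by
              have := mul_le_mul_of_nonneg_right h2 (norm_nonneg s)
              linarith)
        _ = L_H * t * ‖s‖ ^ 2 := by ring
    have hgcont : Continuous fun t : ℝ => L_H * t * ‖s‖ ^ 2 :=
      (continuous_const.mul continuous_id).mul continuous_const
    have hae : ∀ᵐ t ∂(MeasureTheory.volume.restrict (Set.uIoc (0:ℝ) 1)),
        ‖H (x + t • s) s - H x s‖ ≤ L_H * t * ‖s‖ ^ 2 := by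
      filter_upwards [MeasureTheory.ae_restrict_mem measurableSet_uIoc] with t ht
      exact hbd t (Set.uIoc_subset_uIcc ht)
    have hle := intervalIntegral.norm_integral_le_abs_of_norm_le
      (f := fun t : ℝ => H (x + t • s) s - H x s) (a := (0:ℝ)) (b := 1)
      hae (hgcont.intervalIntegrable _ _)
    refine hle.trans ?_
    rw [abs_of_nonneg (intervalIntegral.integral_nonneg zero_le_one
      (fun t ht => mul_nonneg (mul_nonneg hLH ht.1) (sq_nonneg _)))]
    have : ∫ t in (0:ℝ)..1, L_H * t * ‖s‖ ^ 2
        = (∫ t in (0:ℝ)..1, t) * (L_H * ‖s‖ ^ 2) := by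
      rw [← intervalIntegral.integral_mul_const]
      congr 1; ext t; ring
    rw [this, integral_id]
    ring_nf
    norm_num
  have hgx : g (x + s) = (g (x + s) - g x - H x s) + z - (σ * ‖s‖) • s := by
    have : H x s = -g x + z - (σ * ‖s‖) • s := by
      rw [← hstep]; abel
    rw [this]; abel
  have hσs : ‖(σ * ‖s‖) • s‖ = σ * ‖s‖ ^ 2 := by
    rw [norm_smul, Real.norm_eq_abs, abs_of_nonneg (by positivity)]
    ring
  have h1 : ‖g (x + s)‖ ≤ L_H / 2 * ‖s‖ ^ 2 + θ / 2 * ‖s‖ ^ 2 + σ * ‖s‖ ^ 2 := by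
    rw [hgx]
    calc ‖(g (x + s) - g x - H x s) + z - (σ * ‖s‖) • s‖
        ≤ ‖(g (x + s) - g x - H x s) + z‖ + ‖(σ * ‖s‖) • s‖ := norm_sub_le _ _
      _ ≤ ‖g (x + s) - g x - H x s‖ + ‖z‖ + ‖(σ * ‖s‖) • s‖ := by
          have := norm_add_le (g (x + s) - g x - H x s) z
          linarith
      _ ≤ L_H / 2 * ‖s‖ ^ 2 + θ / 2 * ‖s‖ ^ 2 + σ * ‖s‖ ^ 2 := by
          rw [hσs]; linarith
  have hs2 : (0:ℝ) ≤ ‖s‖ ^ 2 := by positivity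
  have hfirst : ‖g (x + s)‖ ≤ (2 * σmax + L_H + θ) / 2 * ‖s‖ ^ 2 := by
    nlinarith
  refine ⟨hfirst, ?_⟩
  have hD : (0:ℝ) < 2 * σmax + L_H + θ := by linarith
  rw [div_mul_eq_mul_div, div_le_iff₀ hD]
  nlinarith
end

section
/- Let f : ℝⁿ → ℝ satisfy inf f > −∞, let g : ℝⁿ → ℝⁿ, let ε > 0, η₁ ∈ (0,1), L̃ > 0, and 0 < σ_min ≤ σ_max, L_H ≥ 0, θ ≥ 0. Let {x^k}_{0 ≤ k ≤ K} be a sequence and let S ⊆ {0, …, K−1} (the successful iterations) be such that: (i) x^{k+1} = x^k for k ∉ S; (ii) for each k ∈ S there exist s^k ∈ ℝⁿ and σ_k ∈ [σ_min, σ_max] with x^{k+1} = x^k + s^k, f(x^k) − f(x^{k+1}) ≥ η₁ (L̃/4) σ_k ‖s^k‖³, and ‖s^k‖² ≥ (2 / (2 σ_max + L_H + θ)) ‖g(x^{k+1})‖; and (iii) ‖g(x^{k+1})‖ > ε for all 0 ≤ k ≤ K−1. Then the number of successful iterations satisfies |S| ≤ (4 / (η₁ L̃ σ_min)) ((2 σ_max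 + L_H + θ)/2)^{3/2} (f(x⁰) − inf f) / ε^{3/2} + 1. -/
/-- Bound on the number of successful iterations of the adaptive regularized
preconditioned Newton scheme: under the sufficient-decrease and step-length
properties of successful iterations, if all observed (preconditioned) gradients
exceed `ε`, then the number of successful iterations is at most
`(4/(η₁ L̃ σ_min)) ((2σ_max + L_H + θ)/2)^{3/2} (f(x⁰) − inf f)/ε^{3/2} + 1`. -/
theorem adaptive_successful_iterations_bound {n : ℕ}
    (f : EuclideanSpace ℝ (Fin n) → ℝ) (hbdd : BddBelow (Set.range f))
    (g : EuclideanSpace ℝ (Fin n) → EuclideanSpace ℝ (Fin n))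
    (ε η₁ Ltil σmin σmax L_H θ : ℝ)
    (hε : 0 < ε) (hη₁ : 0 < η₁) (hη₁' : η₁ < 1) (hLtil : 0 < Ltil)
    (hσmin : 0 < σmin) (hσ : σmin ≤ σmax) (hLH : 0 ≤ L_H) (hθ : 0 ≤ θ)
    (K : ℕ) (x : ℕ → EuclideanSpace ℝ (Fin n))
    (S : Finset ℕ) (hS : S ⊆ Finset.range K)
    (hunsucc : ∀ k < K, k ∉ S → x (k + 1) = x k)
    (hsucc : ∀ k ∈ S, ∃ (s : EuclideanSpace ℝ (Fin n)) (σk : ℝ),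
      σmin ≤ σk ∧ σk ≤ σmax ∧ x (k + 1) = x k + s ∧
      η₁ * (Ltil / 4) * σk * ‖s‖ ^ 3 ≤ f (x k) - f (x (k + 1)) ∧
      2 / (2 * σmax + L_H + θ) * ‖g (x (k + 1))‖ ≤ ‖s‖ ^ 2)
    (hgrad : ∀ k < K, ε < ‖g (x (k + 1))‖) :
    (S.card : ℝ) ≤ 4 / (η₁ * Ltil * σmin) *
      ((2 * σmax + L_H + θ) / 2) ^ ((3 : ℝ) / 2) *
      (f (x 0) - ⨅ y, f y) / ε ^ ((3 : ℝ) / 2) + 1 := by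
  set D : ℝ := 2 * σmax + L_H + θ with hDdef
  have hD : 0 < D := by have : 0 < σmax := lt_of_lt_of_le hσmin hσ; positivity
  set c : ℝ := η₁ * (Ltil / 4) * σmin * ((2 / D) * ε) ^ ((3 : ℝ) / 2) with hcdef
  have hc : 0 < c := by positivity
  -- each successful iteration decreases f by at least c
  have hstep : ∀ k ∈ S, c ≤ f (x k) - f (x (k + 1)) := by
    intro k hk
    obtain ⟨s, σk, h1, h2, _, h4, h5⟩ := hsucc k hk
    have hkK : k < K := Finset.mem_range.mp (hS hk)
    have hg : ε < ‖g (x (k + 1))‖ := hgrad k hkK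
    have hs2 : (2 / D) * ε ≤ ‖s‖ ^ 2 := by
      calc (2 / D) * ε ≤ 2 / D * ‖g (x (k + 1))‖ := by
            apply mul_le_mul_of_nonneg_left hg.le (by positivity)
        _ ≤ ‖s‖ ^ 2 := h5
    have h3 : ((‖s‖ : ℝ) ^ 2) ^ ((3 : ℝ) / 2) = ‖s‖ ^ 3 := by
      rw [← Real.rpow_natCast ‖s‖ 2, ← Real.rpow_mul (norm_nonneg s),
        ← Real.rpow_natCast ‖s‖ 3]
      norm_num
    have hs3 : ((2 / D) * ε) ^ ((3 : ℝ) / 2) ≤ ‖s‖ ^ 3 := by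
      rw [← h3]
      exact Real.rpow_le_rpow (by positivity) hs2 (by norm_num)
    calc c ≤ η₁ * (Ltil / 4) * σmin * ‖s‖ ^ 3 := by
          apply mul_le_mul_of_nonneg_left hs3 (by positivity)
      _ ≤ η₁ * (Ltil / 4) * σk * ‖s‖ ^ 3 := by
          have : (0:ℝ) ≤ ‖s‖ ^ 3 := by positivity
          nlinarith [mul_le_mul_of_nonneg_left h1 (le_of_lt (by positivity : (0:ℝ) < η₁ * (Ltil / 4)))]
      _ ≤ f (x k) - f (x (k + 1)) := h4
  -- telescoping
  have htel : ∑ k ∈ Finset.range K, (f (x k) - f (x (k + 1))) = f (x 0) - f (x K) :=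
    Finset.sum_range_sub' (fun k => f (x k)) K
  have hsum : (S.card : ℝ) * c ≤ f (x 0) - f (x K) := by
    calc (S.card : ℝ) * c = ∑ _k ∈ S, c := by rw [Finset.sum_const, nsmul_eq_mul]
      _ ≤ ∑ k ∈ S, (f (x k) - f (x (k + 1))) := Finset.sum_le_sum hstep
      _ ≤ ∑ k ∈ Finset.range K, (f (x k) - f (x (k + 1))) := by
          apply Finset.sum_le_sum_of_subset_of_nonneg hS
          intro k hk hk'
          rw [hunsucc k (Finset.mem_range.mp hk) hk']
          simp
      _ = f (x 0) - f (x K) := htel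
  have hinf : (⨅ y, f y) ≤ f (x K) := ciInf_le hbdd (x K)
  have hA : (S.card : ℝ) * c ≤ f (x 0) - ⨅ y, f y := by linarith
  have hcard : (S.card : ℝ) ≤ (f (x 0) - ⨅ y, f y) / c := (le_div_iff₀ hc).mpr hA
  have hceq : (f (x 0) - ⨅ y, f y) / c =
      4 / (η₁ * Ltil * σmin) * (D / 2) ^ ((3 : ℝ) / 2) *
        (f (x 0) - ⨅ y, f y) / ε ^ ((3 : ℝ) / 2) := by
    have h1 : ((2 / D) * ε) ^ ((3 : ℝ) / 2) =
        ε ^ ((3 : ℝ) / 2) / (D / 2) ^ ((3 : ℝ) / 2) := by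
      have : (2 / D) * ε = ε / (D / 2) := by field_simp
      rw [this, Real.div_rpow hε.le (by positivity)]
    rw [hcdef, h1]
    have he : (0:ℝ) < ε ^ ((3 : ℝ) / 2) := by positivity
    have hd2 : (0:ℝ) < (D / 2) ^ ((3 : ℝ) / 2) := by positivity
    field_simp
  rw [hceq] at hcard
  linarith
end
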